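/- arXiv:2103.14614 — 4 statements merged into one kernel-verified Lean document; each statement's English description precedes it below -/
import Mathlib

section
/- Let u, b : 𝕋 → ℝ be continuous with |u(y)| < b(y) for all y. If Φ ∈ H¹(𝕋) is complex-valued, c = c_r + i·c_i ∈ ℂ with c_i ≠ 0, and ∫_𝕋 ((u(y)−c)² − b(y)²)(|Φ'(y)|² + α²|Φ(y)|²) dy = 0 (with the complex square (u−c)²), then Φ ≡ 0. -/
open MeasureTheory

/-- If `u, b` are continuous `2π`-periodic profiles with `|u| < b`,
`Φ` is a `C¹` periodic complex function, `c` has nonzero imaginary part, and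
`∫ ((u-c)² - b²)(|Φ'|² + α²|Φ|²) = 0`, then `Φ ≡ 0`. -/
theorem stmt_0
    (u b : ℝ → ℝ) (hu : Continuous u) (hb : Continuous b)
    (hub : ∀ y, |u y| < b y)
    (hup : Function.Periodic u (2 * Real.pi)) (hbp : Function.Periodic b (2 * Real.pi))
    (Φ Φ' : ℝ → ℂ) (hΦ : Continuous Φ) (hΦ' : Continuous Φ')
    (hΦp : Function.Periodic Φ (2 * Real.pi))
    (hderiv : ∀ y, HasDerivAt Φ (Φ' y) y)
    (α : ℝ) (hα : α ≠ 0)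
    (c : ℂ) (hc : c.im ≠ 0)
    (hint : ∫ y in (0:ℝ)..(2 * Real.pi),
        ((((u y : ℂ)) - c) ^ 2 - ((b y : ℂ)) ^ 2) *
          (((‖Φ' y‖ ^ 2 + α ^ 2 * ‖Φ y‖ ^ 2 : ℝ)) : ℂ) = 0) :
    ∀ y, Φ y = 0 := by
  set p := c.re with hp
  set q := c.im with hq
  set W : ℝ → ℝ := fun y => ‖Φ' y‖ ^ 2 + α ^ 2 * ‖Φ y‖ ^ 2 with hW
  have hWc : Continuous W := by
    continuity
  have hWnn : ∀ y, 0 ≤ W y := fun y => by positivity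
  set f : ℝ → ℝ := fun y => ((u y - p) ^ 2 - q ^ 2 - (b y) ^ 2) * W y with hf
  set g : ℝ → ℝ := fun y => (u y - p) * W y with hg
  have hfc : Continuous f := by fun_prop
  have hgc : Continuous g := by fun_prop
  -- rewrite the complex integrand
  have key : ∀ y, ((((u y : ℂ)) - c) ^ 2 - ((b y : ℂ)) ^ 2) * ((W y : ℝ) : ℂ)
      = ((f y : ℂ)) + ((-2 * q * g y : ℝ) : ℂ) * Complex.I := by
    intro y
    apply Complex.ext <;>
      simp [f, g, ← hp, ← hq, Complex.ext_iff, Complex.add_re, Complex.mul_re, Complex.mul_im,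
        Complex.sub_re, Complex.sub_im, pow_two] <;> ring
  have hint2 : ((∫ y in (0:ℝ)..(2 * Real.pi), f y : ℝ) : ℂ)
      + ((∫ y in (0:ℝ)..(2 * Real.pi), -2 * q * g y : ℝ) : ℂ) * Complex.I = 0 := by
    rw [← hint]
    rw [← intervalIntegral.integral_ofReal (f := f),
        ← intervalIntegral.integral_ofReal (f := fun y => -2 * q * g y),
        ← intervalIntegral.integral_mul_const, ← intervalIntegral.integral_add]
    · exact intervalIntegral.integral_congr fun y _ => (key y).symm
    · exact (Complex.continuous_ofReal.comp hfc).intervalIntegrable _ _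
    · apply Continuous.intervalIntegrable
      exact (Complex.continuous_ofReal.comp (by fun_prop)).mul continuous_const
  have hfe : (∫ y in (0:ℝ)..(2 * Real.pi), f y) = 0 := by
    have := congrArg Complex.re hint2
    simpa using this
  have hge : (∫ y in (0:ℝ)..(2 * Real.pi), g y) = 0 := by
    have him := congrArg Complex.im hint2
    simp at him
    have : -2 * q * (∫ y in (0:ℝ)..(2 * Real.pi), g y) = 0 := by
      rw [← intervalIntegral.integral_const_mul]
      simpa using him
    have h2q : (-2 : ℝ) * q ≠ 0 := by
      simp [hc]
    exact (mul_eq_zero.mp this).resolve_left h2q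
  -- the nonnegative combination
  set h : ℝ → ℝ := fun y => (p ^ 2 + q ^ 2 + (b y) ^ 2 - (u y) ^ 2) * W y with hh
  have hhc : Continuous h := by fun_prop
  have hhnn : ∀ y, 0 ≤ h y := by
    intro y
    have hub' : (u y) ^ 2 < (b y) ^ 2 := by
      nlinarith [hub y, abs_nonneg (u y), sq_abs (u y)]
    have := hWnn y
    simp only [h]
    nlinarith [sq_nonneg p, sq_nonneg q]
  have hhint : (∫ y in (0:ℝ)..(2 * Real.pi), h y) = 0 := by
    have expand : ∀ y, h y = -f y + (-2 * p) * g y := by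
      intro y; simp only [h, f, g]; ring
    rw [intervalIntegral.integral_congr (fun y _ => expand y),
        intervalIntegral.integral_add (by exact (hfc.neg.intervalIntegrable _ _))
          (by exact ((continuous_const.mul hgc).intervalIntegrable _ _)),
        intervalIntegral.integral_neg, intervalIntegral.integral_const_mul, hfe, hge]
    ring
  -- conclude W ≡ 0 on [0, 2π)
  have hW0 : ∀ y ∈ Set.Ico (0:ℝ) (2 * Real.pi), Φ y = 0 := by
    intro y hy
    by_contra hne
    have hWy : 0 < W y := by
      have : 0 < ‖Φ y‖ := norm_pos_iff.mpr hne
      have : 0 < α ^ 2 * ‖Φ y‖ ^ 2 := by positivity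
      have := sq_nonneg ‖Φ' y‖
      simp only [W]; nlinarith
    have hhy : 0 < h y := by
      have hub' : (u y) ^ 2 < (b y) ^ 2 := by
        nlinarith [hub y, abs_nonneg (u y), sq_abs (u y)]
      have : 0 < p ^ 2 + q ^ 2 + (b y) ^ 2 - (u y) ^ 2 := by nlinarith [sq_nonneg p, sq_nonneg q]
      exact mul_pos this hWy
    have hpos : 0 < ∫ y in (0:ℝ)..(2 * Real.pi), h y := by
      apply intervalIntegral.integral_pos Real.two_pi_pos
      · exact hhc.continuousOn
      · exact fun x _ => hhnn x
      · exact ⟨y, ⟨hy.1, hy.2.le⟩, hhy⟩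
    rw [hhint] at hpos
    exact lt_irrefl 0 hpos
  intro y
  obtain ⟨z, hz, hzy⟩ := hΦp.exists_mem_Ico₀ Real.two_pi_pos y
  rw [hzy]
  exact hW0 z hz
end

section
/- Let w : 𝕋 → ℝ be C³ such that every critical point of w is non-degenerate (w'(y)=0 implies w''(y)≠0). Then for every α ≠ 0 and every g ∈ H¹(𝕋) there is a constant C (independent of t and g) such that ‖e^{−iα w(·) t} g(·)‖_{H^{-1}(𝕋)} ≤ C ⟨t⟩^{−1/2} ‖g‖_{H¹(𝕋)} for all t ≥ 0, where ⟨t⟩ = √(1+t²). -/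
open intervalIntegral Real MeasureTheory Set


noncomputable def ee (u : ℝ → ℝ) (μ : ℝ) (y : ℝ) : ℂ := Complex.exp (Complex.I * μ * u y)

lemma ee_norm (u : ℝ → ℝ) (μ y : ℝ) : ‖ee u μ y‖ = 1 := by
  rw [ee, Complex.norm_exp]; simp

lemma ee_cont {u : ℝ → ℝ} (hu : Continuous u) (μ : ℝ) : Continuous (ee u μ) := by
  unfold ee; fun_prop

/-- Integration by parts for oscillatory integrals (nonstationary phase). -/
lemma osc_ibp (u u' u'' : ℝ → ℝ) (hu' : ∀ y, HasDerivAt u (u' y) y)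
    (hu'' : ∀ y, HasDerivAt u' (u'' y) y)
    (hcu' : Continuous u') (hcu'' : Continuous u'')
    (a b ρ μ : ℝ) (hab : a ≤ b) (hμ : μ ≠ 0) (hρ : 0 < ρ)
    (hlow : ∀ y ∈ Icc a b, ρ ≤ |u' y|) :
    ‖∫ y in a..b, ee u μ y‖ ≤ (2 / ρ + ∫ y in a..b, |u'' y| / (u' y)^2) / |μ| := by
  have hcu : Continuous u := by
    have : Differentiable ℝ u := fun y => (hu' y).differentiableAt
    exact this.continuous
  have hne : ∀ y ∈ Set.uIcc a b, u' y ≠ 0 := by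
    intro y hy
    rw [Set.uIcc_of_le hab] at hy
    have := hlow y hy
    intro h; rw [h] at this; simp at this; linarith
  set F : ℝ → ℂ := fun y => ee u μ y / (Complex.I * μ * u' y) with hF
  have hIμ : ∀ y, y ∈ Set.uIcc a b → (Complex.I * μ * u' y) ≠ 0 := by
    intro y hy
    simp only [mul_ne_zero_iff]
    refine ⟨⟨Complex.I_ne_zero, ?_⟩, ?_⟩
    · exact_mod_cast hμ
    · exact_mod_cast hne y hy
  have hderiv : ∀ y ∈ Set.uIcc a b,
      HasDerivAt F (ee u μ y - ee u μ y * (u'' y) / (Complex.I * μ * (u' y)^2)) y := by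
    intro y hy
    have h1 : HasDerivAt (fun y => (Complex.I * μ * u y)) (Complex.I * μ * u' y) y := by
      have := ((hu' y).ofReal_comp).const_mul (Complex.I * μ)
      simpa [mul_comm] using this
    have h2 : HasDerivAt (fun y => ee u μ y) (ee u μ y * (Complex.I * μ * u' y)) y := by
      have := h1.cexp
      simpa [ee, mul_comm] using this
    have h3 : HasDerivAt (fun y => (Complex.I * μ * u' y)) (Complex.I * μ * u'' y) y := by
      have := ((hu'' y).ofReal_comp).const_mul (Complex.I * μ)
      simpa [mul_comm] using this
    have h4 := h2.div h3 (hIμ y hy)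
    refine HasDerivAt.congr_deriv h4 ?_
    have hne' : (u' y : ℂ) ≠ 0 := by exact_mod_cast hne y hy
    have hμ' : (μ : ℂ) ≠ 0 := by exact_mod_cast hμ
    field_simp
  have hcont_corr : ContinuousOn (fun y => ee u μ y * (u'' y) / (Complex.I * μ * (u' y)^2))
      (Set.uIcc a b) := by
    apply ContinuousOn.div
    · exact (((ee_cont hcu μ).mul (Complex.continuous_ofReal.comp hcu'')).continuousOn)
    · fun_prop
    · intro y hy
      have := hIμ y hy
      intro h
      apply this
      have : (u' y : ℂ) ^ 2 = 0 ∨ (Complex.I * μ) = 0 := by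
        rcases mul_eq_zero.mp h with h | h
        · right; exact h
        · left; exact h
      rcases this with h | h
      · exact absurd (pow_eq_zero_iff (n := 2) (by norm_num) |>.mp h)
          (by exact_mod_cast hne y hy)
      · rw [h]; ring
  have hint_corr : IntervalIntegrable (fun y => ee u μ y * (u'' y) / (Complex.I * μ * (u' y)^2))
      volume a b := hcont_corr.intervalIntegrable
  have hint_e : IntervalIntegrable (ee u μ) volume a b := (ee_cont hcu μ).intervalIntegrable _ _
  have key : ∫ y in a..b, (ee u μ y - ee u μ y * (u'' y) / (Complex.I * μ * (u' y)^2))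
      = F b - F a := by
    apply intervalIntegral.integral_eq_sub_of_hasDerivAt hderiv
    exact (hint_e.sub hint_corr)
  have split : ∫ y in a..b, ee u μ y = (F b - F a) +
      ∫ y in a..b, ee u μ y * (u'' y) / (Complex.I * μ * (u' y)^2) := by
    rw [← key, intervalIntegral.integral_sub hint_e hint_corr]; ring
  rw [split]
  have hFnorm : ∀ y ∈ Set.Icc a b, ‖F y‖ ≤ 1 / (ρ * |μ|) := by
    intro y hy
    rw [hF]
    simp only [norm_div, ee_norm, norm_mul, Complex.norm_I,
      one_mul, Complex.norm_real, Real.norm_eq_abs]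
    have h1 := hlow y hy
    have hμp : 0 < |μ| := abs_pos.mpr hμ
    have h2 : 0 < |u' y| := lt_of_lt_of_le hρ h1
    rw [div_le_div_iff₀ (by positivity) (mul_pos hρ hμp)]
    nlinarith
  have hcorr_norm : ‖∫ y in a..b, ee u μ y * (u'' y) / (Complex.I * μ * (u' y)^2)‖
      ≤ (∫ y in a..b, |u'' y| / (u' y)^2) / |μ| := by
    have hpt : ∀ y : ℝ, ‖ee u μ y * (u'' y) / (Complex.I * μ * (u' y)^2)‖
        = |u'' y| / (u' y)^2 / |μ| := by
      intro y
      simp only [norm_div, norm_mul, ee_norm, Complex.norm_I,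
        one_mul, Complex.norm_real, Real.norm_eq_abs, norm_pow]
      rw [sq_abs]
      by_cases h : u' y = 0
      · simp [h]
      · rw [div_div, mul_comm]
    calc ‖∫ y in a..b, ee u μ y * (u'' y) / (Complex.I * μ * (u' y)^2)‖
        ≤ ∫ y in a..b, ‖ee u μ y * (u'' y) / (Complex.I * μ * (u' y)^2)‖ :=
          intervalIntegral.norm_integral_le_integral_norm hab
      _ = ∫ y in a..b, |u'' y| / (u' y)^2 / |μ| := by
          apply intervalIntegral.integral_congr; intro y _; exact hpt y
      _ = (∫ y in a..b, |u'' y| / (u' y)^2) / |μ| := by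
          rw [intervalIntegral.integral_div]
  calc ‖F b - F a + ∫ y in a..b, ee u μ y * (u'' y) / (Complex.I * μ * (u' y)^2)‖
      ≤ ‖F b - F a‖ + ‖∫ y in a..b, ee u μ y * (u'' y) / (Complex.I * μ * (u' y)^2)‖ :=
        norm_add_le _ _
    _ ≤ (‖F b‖ + ‖F a‖) + (∫ y in a..b, |u'' y| / (u' y)^2) / |μ| := by
        gcongr
        exact norm_sub_le _ _
    _ ≤ (1 / (ρ * |μ|) + 1 / (ρ * |μ|)) + (∫ y in a..b, |u'' y| / (u' y)^2) / |μ| := by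
        gcongr
        · exact hFnorm b ⟨hab, le_refl b⟩
        · exact hFnorm a ⟨le_refl a, hab⟩
    _ = (2 / ρ + ∫ y in a..b, |u'' y| / (u' y)^2) / |μ| := by
        have hμp : (0:ℝ) < |μ| := abs_pos.mpr hμ
        field_simp
        ring


/-- Sign constancy for a continuous nonvanishing function on an interval. -/
lemma sign_const (u : ℝ → ℝ) (hc : Continuous u) (a b : ℝ) (hab : a ≤ b)
    (hne : ∀ y ∈ Icc a b, u y ≠ 0) :
    (∀ y ∈ Icc a b, 0 < u y) ∨ (∀ y ∈ Icc a b, u y < 0) := by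
  have ha : a ∈ Icc a b := ⟨le_refl a, hab⟩
  rcases lt_or_gt_of_ne (hne a ha) with hneg | hpos
  · right
    intro y hy
    by_contra h
    push_neg at h
    have hy0 : 0 < u y := lt_of_le_of_ne h (Ne.symm (hne y hy))
    have : (0:ℝ) ∈ Icc (u a) (u y) := ⟨le_of_lt hneg, le_of_lt hy0⟩
    have hsub := intermediate_value_Icc hy.1 hc.continuousOn this
    obtain ⟨z, hz, hz0⟩ := hsub
    exact hne z ⟨hz.1, le_trans hz.2 hy.2⟩ hz0
  · left
    intro y hy
    by_contra h
    push_neg at h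
    have hy0 : u y < 0 := lt_of_le_of_ne h (hne y hy)
    have : (0:ℝ) ∈ Icc (u y) (u a) := ⟨le_of_lt hy0, le_of_lt hpos⟩
    have hsub := intermediate_value_Icc' hy.1 hc.continuousOn this
    obtain ⟨z, hz, hz0⟩ := hsub
    exact hne z ⟨hz.1, le_trans hz.2 hy.2⟩ hz0


lemma corr_integrable (u' u'' : ℝ → ℝ) (hcu' : Continuous u') (hcu'' : Continuous u'')
    (a b ρ : ℝ) (hab : a ≤ b) (hρ : 0 < ρ) (hlow : ∀ y ∈ Icc a b, ρ ≤ |u' y|) :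
    IntervalIntegrable (fun y => |u'' y| / (u' y)^2) volume a b := by
  apply ContinuousOn.intervalIntegrable
  rw [uIcc_of_le hab]
  apply ContinuousOn.div
  · exact (hcu''.abs).continuousOn
  · fun_prop
  · intro y hy
    intro h
    have h0 : u' y = 0 := pow_eq_zero_iff (n := 2) (by norm_num) |>.mp h
    have h1 := hlow y hy
    rw [h0] at h1; simp at h1; linarith

/-- Corollary A: first-derivative test with bounded second derivative. -/
lemma osc_A (u u' u'' : ℝ → ℝ) (hu' : ∀ y, HasDerivAt u (u' y) y)
    (hu'' : ∀ y, HasDerivAt u' (u'' y) y)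
    (hcu' : Continuous u') (hcu'' : Continuous u'')
    (a b ρ M μ : ℝ) (hab : a ≤ b) (hμ : μ ≠ 0) (hρ : 0 < ρ)
    (hlow : ∀ y ∈ Icc a b, ρ ≤ |u' y|) (hM : ∀ y ∈ Icc a b, |u'' y| ≤ M) :
    ‖∫ y in a..b, ee u μ y‖ ≤ (2 / ρ + M * (b - a) / ρ^2) / |μ| := by
  refine le_trans (osc_ibp u u' u'' hu' hu'' hcu' hcu'' a b ρ μ hab hμ hρ hlow) ?_
  have hμp : (0:ℝ) < |μ| := abs_pos.mpr hμ
  gcongr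
  have hMnn : 0 ≤ M := le_trans (abs_nonneg _) (hM a ⟨le_refl a, hab⟩)
  calc ∫ y in a..b, |u'' y| / (u' y)^2 ≤ ∫ y in a..b, M / ρ^2 := by
        apply intervalIntegral.integral_mono_on hab
          (corr_integrable u' u'' hcu' hcu'' a b ρ hab hρ hlow)
          (intervalIntegrable_const)
        intro y hy
        have h1 := hlow y hy
        have h2 : ρ^2 ≤ (u' y)^2 := by
          rw [← sq_abs (u' y)]
          exact pow_le_pow_left₀ (le_of_lt hρ) h1 2
        exact div_le_div₀ hMnn (hM y hy) (by positivity) h2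
    _ = M * (b - a) / ρ^2 := by
        rw [intervalIntegral.integral_const]
        simp [smul_eq_mul]
        ring

/-- Corollary A': first-derivative test with monotone derivative (u'' ≥ 0). -/
lemma osc_A' (u u' u'' : ℝ → ℝ) (hu' : ∀ y, HasDerivAt u (u' y) y)
    (hu'' : ∀ y, HasDerivAt u' (u'' y) y)
    (hcu' : Continuous u') (hcu'' : Continuous u'')
    (a b ρ μ : ℝ) (hab : a ≤ b) (hμ : μ ≠ 0) (hρ : 0 < ρ)
    (hlow : ∀ y ∈ Icc a b, ρ ≤ |u' y|) (hmono : ∀ y ∈ Icc a b, 0 ≤ u'' y) :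
    ‖∫ y in a..b, ee u μ y‖ ≤ 3 / (ρ * |μ|) := by
  refine le_trans (osc_ibp u u' u'' hu' hu'' hcu' hcu'' a b ρ μ hab hμ hρ hlow) ?_
  have hμp : (0:ℝ) < |μ| := abs_pos.mpr hμ
  have hne : ∀ y ∈ Icc a b, u' y ≠ 0 := by
    intro y hy h
    have := hlow y hy; rw [h] at this; simp at this; linarith
  -- FTC for -(u')⁻¹
  have hftc : ∫ y in a..b, u'' y / (u' y)^2 = (-(u' b)⁻¹) - (-(u' a)⁻¹) := by
    apply intervalIntegral.integral_eq_sub_of_hasDerivAt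
    · intro y hy
      rw [uIcc_of_le hab] at hy
      have h := ((hu'' y).inv (hne y hy)).neg
      convert h using 1
      · rfl
      · ring
    · apply ContinuousOn.intervalIntegrable
      rw [uIcc_of_le hab]
      apply ContinuousOn.div hcu''.continuousOn (by fun_prop)
      intro y hy h
      exact hne y hy (pow_eq_zero_iff (n := 2) (by norm_num) |>.mp h)
  have hcongr : ∫ y in a..b, |u'' y| / (u' y)^2 = ∫ y in a..b, u'' y / (u' y)^2 := by
    apply intervalIntegral.integral_congr
    intro y hy
    rw [uIcc_of_le hab] at hy
    dsimp only
    rw [abs_of_nonneg (hmono y hy)]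
  have hval : (-(u' b)⁻¹) - (-(u' a)⁻¹) ≤ 1 / ρ := by
    have hmono' : u' a ≤ u' b := by
      have : ∫ y in a..b, u'' y = u' b - u' a :=
        intervalIntegral.integral_eq_sub_of_hasDerivAt
          (fun y hy => hu'' y) (hcu''.intervalIntegrable a b)
      nlinarith [intervalIntegral.integral_nonneg (μ := volume) hab hmono, this]
    rcases sign_const u' hcu' a b hab hne with hpos | hneg
    · have ha := hpos a ⟨le_refl a, hab⟩
      have hb := hpos b ⟨hab, le_refl b⟩
      have hra := hlow a ⟨le_refl a, hab⟩
      rw [abs_of_pos ha] at hra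
      have : (u' b)⁻¹ ≤ (u' a)⁻¹ := by
        apply inv_anti₀ ha hmono'
      have h2 : (u' a)⁻¹ ≤ 1/ρ := by
        rw [inv_eq_one_div]
        apply div_le_div_of_nonneg_left one_pos.le hρ hra |>.trans (le_refl _)
      nlinarith [inv_pos.mpr hb]
    · have ha := hneg a ⟨le_refl a, hab⟩
      have hb := hneg b ⟨hab, le_refl b⟩
      have hrb := hlow b ⟨hab, le_refl b⟩
      rw [abs_of_neg hb] at hrb
      have h1 : (u' a)⁻¹ ≤ 0 ∧ (u' b)⁻¹ < 0 := ⟨le_of_lt (inv_neg''.mpr ha), inv_neg''.mpr hb⟩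
      have h2 : -(u' b)⁻¹ ≤ 1/ρ := by
        rw [← inv_neg, inv_eq_one_div]
        apply div_le_div_of_nonneg_left one_pos.le hρ hrb |>.trans (le_refl _)
      have h3 : (u' b)⁻¹ ≤ (u' a)⁻¹ := (inv_le_inv_of_neg hb ha).mpr hmono'
      nlinarith
  calc (2 / ρ + ∫ y in a..b, |u'' y| / (u' y)^2) / |μ|
      ≤ (2 / ρ + 1 / ρ) / |μ| := by
        gcongr
        rw [hcongr, hftc]; exact hval
    _ = 3 / (ρ * |μ|) := by field_simp; ring


/-- Van der Corput second-derivative test, positive case. -/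
lemma osc_B (u u' u'' : ℝ → ℝ) (hu' : ∀ y, HasDerivAt u (u' y) y)
    (hu'' : ∀ y, HasDerivAt u' (u'' y) y)
    (hcu' : Continuous u') (hcu'' : Continuous u'')
    (a b δ μ : ℝ) (hab : a ≤ b) (hμ : 1 ≤ |μ|) (hδ : 0 < δ)
    (hconv : ∀ y ∈ Icc a b, δ ≤ u'' y) :
    ‖∫ y in a..b, ee u μ y‖ ≤ (2 + 6 / δ) / Real.sqrt |μ| := by
  have hμ0 : μ ≠ 0 := by intro h; rw [h] at hμ; simp at hμ; linarith
  have hμp : (0:ℝ) < |μ| := abs_pos.mpr hμ0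
  have hsq : 0 < Real.sqrt |μ| := Real.sqrt_pos.mpr hμp
  set r : ℝ := 1 / Real.sqrt |μ| with hr
  have hrpos : 0 < r := by positivity
  have hrμ : r * |μ| = Real.sqrt |μ| := by
    rw [hr]
    rw [div_mul_eq_mul_div, one_mul, ← Real.sqrt_mul_self (le_of_lt hμp)]
    field_simp
    rw [Real.sq_sqrt (Real.sqrt_nonneg _)]
  have hcu : Continuous u := by
    have hd : Differentiable ℝ u := fun y => (hu' y).differentiableAt
    exact hd.continuous
  have hee_int : ∀ p q : ℝ, IntervalIntegrable (ee u μ) volume p q := by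
    intro p q
    exact ((Complex.continuous_exp.comp (by fun_prop)).intervalIntegrable p q)
  -- monotone growth of u'
  have hgrow : ∀ x₁ ∈ Icc a b, ∀ x₂ ∈ Icc a b, x₁ ≤ x₂ →
      u' x₁ + δ * (x₂ - x₁) ≤ u' x₂ := by
    intro x₁ h₁ x₂ h₂ h12
    have hftc : ∫ y in x₁..x₂, u'' y = u' x₂ - u' x₁ :=
      intervalIntegral.integral_eq_sub_of_hasDerivAt (fun y _ => hu'' y)
        (hcu''.intervalIntegrable _ _)
    have hmono : ∫ y in x₁..x₂, (δ:ℝ) ≤ ∫ y in x₁..x₂, u'' y := by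
      apply intervalIntegral.integral_mono_on h12 intervalIntegrable_const
        (hcu''.intervalIntegrable _ _)
      intro y hy
      exact hconv y ⟨le_trans h₁.1 hy.1, le_trans hy.2 h₂.2⟩
    rw [hftc, intervalIntegral.integral_const, smul_eq_mul] at hmono
    nlinarith
  -- choose the near-critical point c
  have hc : ∃ c ∈ Icc a b, (c = a ∨ u' c ≤ 0) ∧ (c = b ∨ 0 ≤ u' c) := by
    by_cases h1 : 0 ≤ u' a
    · exact ⟨a, ⟨le_refl a, hab⟩, Or.inl rfl, Or.inr h1⟩
    by_cases h2 : u' b ≤ 0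
    · exact ⟨b, ⟨hab, le_refl b⟩, Or.inr h2, Or.inl rfl⟩
    push_neg at h1 h2
    have : (0:ℝ) ∈ Icc (u' a) (u' b) := ⟨le_of_lt h1, le_of_lt h2⟩
    obtain ⟨c, hc, hc0⟩ := intermediate_value_Icc hab hcu'.continuousOn this
    exact ⟨c, hc, Or.inr (le_of_eq hc0), Or.inr (ge_of_eq hc0)⟩
  obtain ⟨c, hcmem, hcl, hcr⟩ := hc
  set c₁ : ℝ := max a (c - r) with hc₁
  set c₂ : ℝ := min b (c + r) with hc₂
  have hac₁ : a ≤ c₁ := le_max_left _ _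
  have hc₁c : c₁ ≤ c := max_le hcmem.1 (by linarith)
  have hcc₂ : c ≤ c₂ := le_min hcmem.2 (by linarith)
  have hc₂b : c₂ ≤ b := min_le_left _ _
  -- split
  have hsplit : ∫ y in a..b, ee u μ y =
      (∫ y in a..b, ee u μ y) := rfl
  have hsum : ∫ y in a..b, ee u μ y =
      (∫ y in a..c₁, ee u μ y) + (∫ y in c₁..c₂, ee u μ y) + (∫ y in c₂..b, ee u μ y) := by
    rw [add_assoc, intervalIntegral.integral_add_adjacent_intervals (hee_int c₁ c₂) (hee_int c₂ b),
      intervalIntegral.integral_add_adjacent_intervals (hee_int a c₁) (hee_int c₁ b)]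
  -- middle estimate
  have hmid : ‖∫ y in c₁..c₂, ee u μ y‖ ≤ 2 * r := by
    have := intervalIntegral.norm_integral_le_of_norm_le_const (C := 1)
      (f := ee u μ) (a := c₁) (b := c₂) ?_
    · refine le_trans this ?_
      rw [abs_of_nonneg (by linarith : (0:ℝ) ≤ c₂ - c₁)]
      have : c₂ - c₁ ≤ 2 * r := by
        have h1 : c - r ≤ c₁ := le_max_right _ _
        have h2 : c₂ ≤ c + r := min_le_right _ _
        linarith
      linarith
    · intro x _
      rw [ee, Complex.norm_exp]; simp
  -- left estimate
  have hleft : ‖∫ y in a..c₁, ee u μ y‖ ≤ 3 / (δ * Real.sqrt |μ|) := by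
    by_cases h : c - r ≤ a
    · have : c₁ = a := by rw [hc₁, max_eq_left h]
      rw [this]
      simp
      positivity
    · push_neg at h
      have hc₁eq : c₁ = c - r := by rw [hc₁, max_eq_right (le_of_lt h)]
      have hca : a < c := by linarith
      have huc : u' c ≤ 0 := by
        rcases hcl with h' | h'
        · exfalso; rw [h'] at hca; exact lt_irrefl a hca
        · exact h'
      have hlow : ∀ y ∈ Icc a c₁, δ * r ≤ |u' y| := by
        intro y hy
        have hy2 : y ≤ c - r := by rw [← hc₁eq]; exact hy.2
        have hymem : y ∈ Icc a b := ⟨hy.1, by linarith [hcmem.2]⟩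
        have := hgrow y hymem c hcmem (by linarith)
        have hneg : u' y ≤ -(δ * (c - y)) := by linarith
        have hcy : r ≤ c - y := by linarith
        rw [abs_of_nonpos (by nlinarith)]
        nlinarith
      have := osc_A' u u' u'' hu' hu'' hcu' hcu'' a c₁ (δ * r) μ
        (by rw [hc₁eq]; linarith) hμ0 (by positivity) hlow
        (fun y hy => le_trans (le_of_lt hδ) (hconv y ⟨hy.1, by linarith [hy.2, hcmem.2, hc₁c]⟩))
      refine le_trans this (le_of_eq ?_)
      rw [mul_assoc, hrμ]
  -- right estimate
  have hright : ‖∫ y in c₂..b, ee u μ y‖ ≤ 3 / (δ * Real.sqrt |μ|) := by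
    by_cases h : b ≤ c + r
    · have : c₂ = b := by rw [hc₂, min_eq_left h]
      rw [this]
      simp
      positivity
    · push_neg at h
      have hc₂eq : c₂ = c + r := by rw [hc₂, min_eq_right (le_of_lt h)]
      have hcb : c < b := by linarith
      have huc : 0 ≤ u' c := by
        rcases hcr with h' | h'
        · exfalso; rw [h'] at hcb; exact lt_irrefl b hcb
        · exact h'
      have hlow : ∀ y ∈ Icc c₂ b, δ * r ≤ |u' y| := by
        intro y hy
        have hy1 : c + r ≤ y := by rw [← hc₂eq]; exact hy.1
        have hymem : y ∈ Icc a b := ⟨by linarith [hcmem.1], hy.2⟩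
        have := hgrow c hcmem y hymem (by linarith)
        have hpos : δ * (y - c) ≤ u' y := by linarith
        have hcy : r ≤ y - c := by linarith
        rw [abs_of_nonneg (by nlinarith)]
        nlinarith
      have := osc_A' u u' u'' hu' hu'' hcu' hcu'' c₂ b (δ * r) μ
        (by rw [hc₂eq]; linarith) hμ0 (by positivity) hlow
        (fun y hy => le_trans (le_of_lt hδ) (hconv y ⟨by linarith [hy.1, hcmem.1, hcc₂], hy.2⟩))
      refine le_trans this (le_of_eq ?_)
      rw [mul_assoc, hrμ]
  rw [hsum]
  calc ‖(∫ y in a..c₁, ee u μ y) + (∫ y in c₁..c₂, ee u μ y) + (∫ y in c₂..b, ee u μ y)‖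
      ≤ ‖(∫ y in a..c₁, ee u μ y)‖ + ‖(∫ y in c₁..c₂, ee u μ y)‖ + ‖(∫ y in c₂..b, ee u μ y)‖ := by
        exact le_trans (norm_add_le _ _) (by gcongr; exact norm_add_le _ _)
    _ ≤ 3 / (δ * Real.sqrt |μ|) + 2 * r + 3 / (δ * Real.sqrt |μ|) := by gcongr
    _ = (2 + 6 / δ) / Real.sqrt |μ| := by
        rw [hr]
        field_simp
        ring


/-- Second-derivative test, |u''| version. -/
lemma osc_B_abs (u u' u'' : ℝ → ℝ) (hu' : ∀ y, HasDerivAt u (u' y) y)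
    (hu'' : ∀ y, HasDerivAt u' (u'' y) y)
    (hcu' : Continuous u') (hcu'' : Continuous u'')
    (a b δ μ : ℝ) (hab : a ≤ b) (hμ : 1 ≤ |μ|) (hδ : 0 < δ)
    (hconv : ∀ y ∈ Icc a b, δ ≤ |u'' y|) :
    ‖∫ y in a..b, ee u μ y‖ ≤ (2 + 6 / δ) / Real.sqrt |μ| := by
  have hne : ∀ y ∈ Icc a b, u'' y ≠ 0 := by
    intro y hy h
    have := hconv y hy; rw [h] at this; simp at this; linarith
  rcases sign_const u'' hcu'' a b hab hne with hpos | hneg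
  · apply osc_B u u' u'' hu' hu'' hcu' hcu'' a b δ μ hab hμ hδ
    intro y hy
    have h1 := hconv y hy
    rw [abs_of_pos (hpos y hy)] at h1
    exact h1
  · have heq : ∀ y : ℝ, ee u μ y = ee (fun z => -u z) (-μ) y := by
      intro y
      unfold ee
      congr 1
      push_cast
      ring
    have hint : ∫ y in a..b, ee u μ y = ∫ y in a..b, ee (fun z => -u z) (-μ) y := by
      apply intervalIntegral.integral_congr
      intro y _; exact heq y
    rw [hint]
    have habs : |(-μ)| = |μ| := abs_neg μ
    rw [← habs]
    apply osc_B (fun z => -u z) (fun z => -u' z) (fun z => -u'' z)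
      (fun y => (hu' y).neg) (fun y => (hu'' y).neg) hcu'.neg hcu''.neg
      a b δ (-μ) hab (by rwa [habs]) hδ
    intro y hy
    have h1 := hconv y hy
    rw [abs_of_neg (hneg y hy)] at h1
    exact h1


section
variable (u u' u'' : ℝ → ℝ) (ε ℓ M₂ : ℝ)

/-- Single small piece estimate. -/
lemma osc_piece (hu' : ∀ y, HasDerivAt u (u' y) y)
    (hu'' : ∀ y, HasDerivAt u' (u'' y) y)
    (hcu' : Continuous u') (hcu'' : Continuous u'')
    (hε : 0 < ε) (hℓ : 0 < ℓ) (hM₂ : 0 ≤ M₂)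
    (hdich : ∀ y ∈ Icc 0 (2*π), ε ≤ max |u' y| |u'' y|)
    (hM : ∀ y ∈ Icc 0 (2*π), |u'' y| ≤ M₂)
    (huc : ∀ x ∈ Icc 0 (2*π), ∀ y ∈ Icc 0 (2*π), |x - y| ≤ ℓ →
      |u' x - u' y| ≤ ε/2 ∧ |u'' x - u'' y| ≤ ε/2)
    (a b μ : ℝ) (ha : 0 ≤ a) (hb : b ≤ 2*π) (hab : a ≤ b) (hlen : b - a ≤ ℓ)
    (hμ : 1 ≤ |μ|) :
    ‖∫ y in a..b, ee u μ y‖ ≤ ((4/ε + 4*M₂*ℓ/ε^2) + (2 + 12/ε)) / Real.sqrt |μ| := by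
  have hμ0 : μ ≠ 0 := by intro h; rw [h] at hμ; simp at hμ; linarith
  have hμp : (0:ℝ) < |μ| := abs_pos.mpr hμ0
  have hsq : 0 < Real.sqrt |μ| := Real.sqrt_pos.mpr hμp
  have hsqle : Real.sqrt |μ| ≤ |μ| := by
    nlinarith [Real.sq_sqrt (le_of_lt hμp), Real.sqrt_le_sqrt hμ, Real.sqrt_one]
  have hamem : a ∈ Icc 0 (2*π) := ⟨ha, le_trans hab hb⟩
  have hclose : ∀ y ∈ Icc a b, |u' a - u' y| ≤ ε/2 ∧ |u'' a - u'' y| ≤ ε/2 := by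
    intro y hy
    have hymem : y ∈ Icc 0 (2*π) := ⟨le_trans ha hy.1, le_trans hy.2 hb⟩
    apply huc a hamem y hymem
    rw [abs_of_nonpos (by linarith [hy.1])]
    linarith [hy.2]
  by_cases hcase : ε ≤ |u' a|
  · -- nonstationary piece
    have hlow : ∀ y ∈ Icc a b, ε/2 ≤ |u' y| := by
      intro y hy
      have h1 := (hclose y hy).1
      have := abs_sub_abs_le_abs_sub (u' a) (u' y)
      linarith
    have := osc_A u u' u'' hu' hu'' hcu' hcu'' a b (ε/2) M₂ μ hab hμ0 (by linarith)
      hlow (fun y hy => hM y ⟨le_trans ha hy.1, le_trans hy.2 hb⟩)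
    refine le_trans this ?_
    have hstep1 : (2/(ε/2) + M₂ * (b-a)/(ε/2)^2)/|μ| ≤ (4/ε + 4*M₂*ℓ/ε^2)/|μ| := by
      gcongr ?_ / _
      have h1 : 2/(ε/2) = 4/ε := by field_simp; ring
      have h2 : M₂*(b-a)/(ε/2)^2 ≤ 4*M₂*ℓ/ε^2 := by
        rw [div_pow]
        rw [div_div_eq_mul_div]
        have : (2:ℝ)^2 = 4 := by norm_num
        rw [div_le_div_iff₀ (by positivity) (by positivity)]
        nlinarith [mul_le_mul_of_nonneg_left hlen hM₂, sq_nonneg ε]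
      linarith
    have hstep2 : (4/ε + 4*M₂*ℓ/ε^2)/|μ| ≤ ((4/ε + 4*M₂*ℓ/ε^2) + (2 + 12/ε)) / Real.sqrt |μ| := by
      rw [div_le_div_iff₀ hμp hsq]
      have hK : (0:ℝ) ≤ 4/ε + 4*M₂*ℓ/ε^2 := by positivity
      calc (4/ε + 4*M₂*ℓ/ε^2) * Real.sqrt |μ|
          ≤ (4/ε + 4*M₂*ℓ/ε^2) * |μ| := by gcongr
        _ ≤ ((4/ε + 4*M₂*ℓ/ε^2) + (2 + 12/ε)) * |μ| := by
            have : (0:ℝ) ≤ (2 + 12/ε) := by positivity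
            nlinarith
    exact le_trans hstep1 hstep2
  · -- stationary piece
    push_neg at hcase
    have hwa : ε ≤ |u'' a| := by
      have := hdich a hamem
      rcases le_max_iff.mp this with h | h
      · linarith
      · exact h
    have hconv : ∀ y ∈ Icc a b, ε/2 ≤ |u'' y| := by
      intro y hy
      have h1 := (hclose y hy).2
      have := abs_sub_abs_le_abs_sub (u'' a) (u'' y)
      linarith
    have := osc_B_abs u u' u'' hu' hu'' hcu' hcu'' a b (ε/2) μ hab hμ (by linarith) hconv
    refine le_trans this ?_
    gcongr ?_ / _
    have : 6/(ε/2) = 12/ε := by field_simp; ring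
    have hK : (0:ℝ) ≤ 4/ε + 4*M₂*ℓ/ε^2 := by positivity
    linarith

/-- Covering estimate by induction. -/
lemma osc_cover (hu' : ∀ y, HasDerivAt u (u' y) y)
    (hu'' : ∀ y, HasDerivAt u' (u'' y) y)
    (hcu' : Continuous u') (hcu'' : Continuous u'')
    (hε : 0 < ε) (hℓ : 0 < ℓ) (hM₂ : 0 ≤ M₂)
    (hdich : ∀ y ∈ Icc 0 (2*π), ε ≤ max |u' y| |u'' y|)
    (hM : ∀ y ∈ Icc 0 (2*π), |u'' y| ≤ M₂)
    (huc : ∀ x ∈ Icc 0 (2*π), ∀ y ∈ Icc 0 (2*π), |x - y| ≤ ℓ →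
      |u' x - u' y| ≤ ε/2 ∧ |u'' x - u'' y| ≤ ε/2) :
    ∀ n : ℕ, ∀ a b μ : ℝ, 0 ≤ a → b ≤ 2*π → a ≤ b → b - a ≤ n * ℓ → 1 ≤ |μ| →
    ‖∫ y in a..b, ee u μ y‖ ≤ n * (((4/ε + 4*M₂*ℓ/ε^2) + (2 + 12/ε)) / Real.sqrt |μ|) := by
  have hcu : Continuous u := by
    have hd : Differentiable ℝ u := fun y => (hu' y).differentiableAt
    exact hd.continuous
  have hee_int : ∀ (μ p q : ℝ), IntervalIntegrable (ee u μ) volume p q := by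
    intro μ p q
    exact ((Complex.continuous_exp.comp (by fun_prop)).intervalIntegrable p q)
  intro n
  induction n with
  | zero =>
    intro a b μ ha hb hab hlen hμ
    have : b = a := by simp at hlen; linarith
    rw [this]
    simp
  | succ n ih =>
    intro a b μ ha hb hab hlen hμ
    have hμ0 : μ ≠ 0 := by intro h; rw [h] at hμ; simp at hμ; linarith
    have hsq : 0 < Real.sqrt |μ| := Real.sqrt_pos.mpr (abs_pos.mpr hμ0)
    by_cases hsmall : b - a ≤ ℓ
    · have := osc_piece u u' u'' ε ℓ M₂ hu' hu'' hcu' hcu'' hε hℓ hM₂ hdich hM huc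
        a b μ ha hb hab hsmall hμ
      refine le_trans this ?_
      have hK : (0:ℝ) ≤ ((4/ε + 4*M₂*ℓ/ε^2) + (2 + 12/ε)) / Real.sqrt |μ| := by positivity
      push_cast
      nlinarith
    · push_neg at hsmall
      have hmem : a + ℓ ≤ b := by linarith
      have hsplit : ∫ y in a..b, ee u μ y =
          (∫ y in a..(a+ℓ), ee u μ y) + (∫ y in (a+ℓ)..b, ee u μ y) :=
        (intervalIntegral.integral_add_adjacent_intervals (hee_int μ a (a+ℓ))
          (hee_int μ (a+ℓ) b)).symm
      rw [hsplit]
      have h1 := osc_piece u u' u'' ε ℓ M₂ hu' hu'' hcu' hcu'' hε hℓ hM₂ hdich hM huc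
        a (a+ℓ) μ ha (by linarith) (by linarith) (by linarith) hμ
      have h2 := ih (a+ℓ) b μ (by linarith) hb hmem (by push_cast at hlen ⊢; linarith) hμ
      calc ‖(∫ y in a..(a+ℓ), ee u μ y) + (∫ y in (a+ℓ)..b, ee u μ y)‖
          ≤ ‖∫ y in a..(a+ℓ), ee u μ y‖ + ‖∫ y in (a+ℓ)..b, ee u μ y‖ := norm_add_le _ _
        _ ≤ ((4/ε + 4*M₂*ℓ/ε^2) + (2 + 12/ε)) / Real.sqrt |μ| +
            n * (((4/ε + 4*M₂*ℓ/ε^2) + (2 + 12/ε)) / Real.sqrt |μ|) := by gcongr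
        _ = (n+1) * (((4/ε + 4*M₂*ℓ/ε^2) + (2 + 12/ε)) / Real.sqrt |μ|) := by ring
        _ = _ := by push_cast; ring
end


/-- Cauchy-Schwarz via AM-GM family. -/
lemma cs_aux (I A B : ℝ) (hA : 0 ≤ A) (hB : 0 ≤ B)
    (h : ∀ s : ℝ, 0 < s → I ≤ (s * A + B / s) / 2) :
    I ≤ Real.sqrt A * Real.sqrt B := by
  rcases eq_or_lt_of_le hB with hB0 | hBpos
  · -- B = 0
    rw [← hB0, Real.sqrt_zero, mul_zero]
    by_contra hI
    push_neg at hI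
    rcases eq_or_lt_of_le hA with hA0 | hApos
    · have := h 1 one_pos
      rw [← hA0, ← hB0] at this
      simp at this
      linarith
    · have := h (I / A) (by positivity)
      rw [← hB0] at this
      have e : (I / A * A + 0 / (I / A)) / 2 = I / 2 := by
        field_simp
        ring
      rw [e] at this
      linarith
  · rcases eq_or_lt_of_le hA with hA0 | hApos
    · -- A = 0, B > 0
      rw [← hA0, Real.sqrt_zero, zero_mul]
      by_contra hI
      push_neg at hI
      have := h (B / I) (by positivity)
      rw [← hA0] at this
      have e : (B / I * 0 + B / (B / I)) / 2 = I / 2 := by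
        field_simp
        ring
      rw [e] at this
      linarith
    · have hsA : 0 < Real.sqrt A := Real.sqrt_pos.mpr hApos
      have hsB : 0 < Real.sqrt B := Real.sqrt_pos.mpr hBpos
      have := h (Real.sqrt B / Real.sqrt A) (by positivity)
      have e1 : Real.sqrt B / Real.sqrt A * A = Real.sqrt B * Real.sqrt A := by
        rw [div_mul_eq_mul_div, eq_comm, eq_div_iff (ne_of_gt hsA)]
        linear_combination Real.sqrt B * (Real.sq_sqrt hA)
      have e2 : B / (Real.sqrt B / Real.sqrt A) = Real.sqrt B * Real.sqrt A := by
        rw [div_div_eq_mul_div, eq_comm, eq_div_iff (ne_of_gt hsB)]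
        linear_combination Real.sqrt A * (Real.sq_sqrt hB)
      rw [e1, e2] at this
      linarith
/-- Cauchy-Schwarz for interval integrals of continuous functions. -/
lemma cs_int (f g : ℝ → ℝ) (a b : ℝ) (hab : a ≤ b) (hf : Continuous f) (hg : Continuous g)
    (hf0 : ∀ y, 0 ≤ f y) (hg0 : ∀ y, 0 ≤ g y) :
    ∫ y in a..b, f y * g y ≤
      Real.sqrt (∫ y in a..b, (f y)^2) * Real.sqrt (∫ y in a..b, (g y)^2) := by
  apply cs_aux
  · exact intervalIntegral.integral_nonneg hab (fun y _ => sq_nonneg _)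
  · exact intervalIntegral.integral_nonneg hab (fun y _ => sq_nonneg _)
  · intro s hs
    have hpt : ∀ y, f y * g y ≤ (s * (f y)^2 + (g y)^2 / s) / 2 := by
      intro y
      have h1 : g y^2 / s * s = g y^2 := div_mul_cancel₀ _ (ne_of_gt hs)
      nlinarith [sq_nonneg (s * f y - g y), hs, h1]
    calc ∫ y in a..b, f y * g y
        ≤ ∫ y in a..b, (s * (f y)^2 + (g y)^2 / s) / 2 := by
          apply intervalIntegral.integral_mono_on hab
            ((hf.mul hg).intervalIntegrable a b)
            ((((continuous_const.mul (hf.pow 2)).add ((hg.pow 2).div_const s)).div_const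
              2).intervalIntegrable a b)
          intro y _
          exact hpt y
      _ = (s * (∫ y in a..b, (f y)^2) + (∫ y in a..b, (g y)^2) / s) / 2 := by
          rw [intervalIntegral.integral_div]
          rw [intervalIntegral.integral_add (f := fun y => s * f y ^ 2) (g := fun y => g y ^ 2 / s) ((continuous_const.mul (hf.pow 2)).intervalIntegrable a b)
            (((hg.pow 2).div_const s).intervalIntegrable a b)]
          rw [intervalIntegral.integral_const_mul, intervalIntegral.integral_div]


/-- Sup bound via average plus total variation. -/
lemma sup_bound (f f' : ℝ → ℂ) (hcf : Continuous f) (hcf' : Continuous f')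
    (hd : ∀ y, HasDerivAt f (f' y) y) :
    ∀ y ∈ Icc 0 (2*π), ‖f y‖ ≤
      (∫ s in (0:ℝ)..(2*π), ‖f s‖) / (2*π) + ∫ s in (0:ℝ)..(2*π), ‖f' s‖ := by
  have hπ : (0:ℝ) < 2*π := by positivity
  obtain ⟨x, hx, hmin⟩ := isCompact_Icc.exists_isMinOn (α := ℝ) (s := Icc 0 (2*π))
    (nonempty_Icc.mpr (le_of_lt hπ)) (hcf.norm.continuousOn)
  have havg : ‖f x‖ ≤ (∫ s in (0:ℝ)..(2*π), ‖f s‖) / (2*π) := by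
    rw [le_div_iff₀ hπ]
    have : ∫ s in (0:ℝ)..(2*π), ‖f x‖ ≤ ∫ s in (0:ℝ)..(2*π), ‖f s‖ := by
      apply intervalIntegral.integral_mono_on (le_of_lt hπ) intervalIntegrable_const
        (hcf.norm.intervalIntegrable _ _)
      intro z hz
      exact hmin hz
    rw [intervalIntegral.integral_const, smul_eq_mul] at this
    linarith
  intro y hy
  have hftc : f y - f x = ∫ s in x..y, f' s :=
    (intervalIntegral.integral_eq_sub_of_hasDerivAt (fun s _ => hd s)
      (hcf'.intervalIntegrable _ _)).symm
  have hvar : ‖f y - f x‖ ≤ ∫ s in (0:ℝ)..(2*π), ‖f' s‖ := by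
    rw [hftc]
    refine le_trans (intervalIntegral.norm_integral_le_abs_integral_norm) ?_
    rcases le_total x y with hxy | hxy
    · rw [abs_of_nonneg (intervalIntegral.integral_nonneg hxy (fun s _ => norm_nonneg _))]
      exact intervalIntegral.integral_mono_interval hx.1 hxy hy.2
        (Filter.Eventually.of_forall (fun s => norm_nonneg _))
        (hcf'.norm.intervalIntegrable _ _)
    · rw [intervalIntegral.integral_symm, abs_neg,
        abs_of_nonneg (intervalIntegral.integral_nonneg hxy (fun s _ => norm_nonneg _))]
      exact intervalIntegral.integral_mono_interval hy.1 hxy hx.2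
        (Filter.Eventually.of_forall (fun s => norm_nonneg _))
        (hcf'.norm.intervalIntegrable _ _)
  calc ‖f y‖ = ‖f x + (f y - f x)‖ := by ring_nf
    _ ≤ ‖f x‖ + ‖f y - f x‖ := norm_add_le _ _
    _ ≤ (∫ s in (0:ℝ)..(2*π), ‖f s‖) / (2*π) + ∫ s in (0:ℝ)..(2*π), ‖f' s‖ := by
        gcongr



lemma quarter_pow (x : ℝ) (hx : 0 ≤ x) :
    x ^ (-(1/4:ℝ)) = (Real.sqrt (Real.sqrt x))⁻¹ := by
  rw [Real.rpow_neg hx]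
  congr 1
  rw [Real.sqrt_eq_rpow, Real.sqrt_eq_rpow, ← Real.rpow_mul hx]
  norm_num

set_option maxHeartbeats 2000000 in
/-- Stationary-phase decay in `H⁻¹`: if `w` is a `C³` periodic phase with only
nondegenerate critical points, then for every nonzero `α` there is `C` (independent of `t`
and `g`) such that, in the dual (H⁻¹) formulation, for every `g ∈ H¹` and every test
function `φ` with `‖φ‖_{H¹} ≤ 1`,
`|∫ e^{-iαw t} g φ| ≤ C ⟨t⟩^{-1/2} ‖g‖_{H¹}`. -/
theorem stmt_2
    (w w' w'' : ℝ → ℝ)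
    (hw : ContDiff ℝ 3 w)
    (hw' : ∀ y, HasDerivAt w (w' y) y)
    (hw'' : ∀ y, HasDerivAt w' (w'' y) y)
    (hwp : Function.Periodic w (2 * Real.pi))
    (hnd : ∀ y, w' y = 0 → w'' y ≠ 0)
    (α : ℝ) (hα : α ≠ 0) :
    ∃ C > 0, ∀ (g g' φ φ' : ℝ → ℂ),
      Continuous g → Continuous g' → Continuous φ → Continuous φ' →
      (∀ y, HasDerivAt g (g' y) y) → (∀ y, HasDerivAt φ (φ' y) y) →
      Function.Periodic g (2 * Real.pi) → Function.Periodic φ (2 * Real.pi) →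
      Real.sqrt (∫ y in (0:ℝ)..(2 * Real.pi), ‖φ y‖ ^ 2 + ‖φ' y‖ ^ 2) ≤ 1 →
      ∀ t : ℝ, 0 ≤ t →
        ‖∫ y in (0:ℝ)..(2 * Real.pi),
            Complex.exp (-Complex.I * (α : ℂ) * (w y : ℂ) * (t : ℂ)) * g y * φ y‖
          ≤ C * (1 + t ^ 2) ^ (-(1/4 : ℝ)) *
              Real.sqrt (∫ y in (0:ℝ)..(2 * Real.pi), ‖g y‖ ^ 2 + ‖g' y‖ ^ 2) := by
  -- derived regularity
  have hcw : Continuous w := hw.continuous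
  have hder1 : deriv w = w' := funext fun y => (hw' y).deriv
  have h3 : ContDiff ℝ (2+1) w := by norm_num; exact hw
  have hcd2 : ContDiff ℝ 2 w' := by
    have := (contDiff_succ_iff_deriv.mp h3).2.2
    rwa [hder1] at this
  have hcw' : Continuous w' := hcd2.continuous
  have hcw'' : Continuous w'' := by
    have h1 : deriv w' = w'' := funext fun y => (hw'' y).deriv
    have := hcd2.continuous_deriv (by norm_num)
    rwa [h1] at this
  have hπ : (0:ℝ) < π := Real.pi_pos
  have h2π : (0:ℝ) < 2*π := by positivity
  -- dichotomy constant ε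
  have hGcont : Continuous (fun y => max |w' y| |w'' y|) := (hcw'.abs.max hcw''.abs)
  obtain ⟨y₀, hy₀mem, hy₀min⟩ := isCompact_Icc.exists_isMinOn (s := Icc (0:ℝ) (2*π))
    (nonempty_Icc.mpr (le_of_lt h2π)) hGcont.continuousOn
  set ε := max |w' y₀| |w'' y₀| with hεdef
  have hεpos : 0 < ε := by
    rcases eq_or_ne (w' y₀) 0 with h | h
    · exact lt_of_lt_of_le (abs_pos.mpr (hnd y₀ h)) (le_max_right _ _)
    · exact lt_of_lt_of_le (abs_pos.mpr h) (le_max_left _ _)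
  have hdich : ∀ y ∈ Icc 0 (2*π), ε ≤ max |w' y| |w'' y| := fun y hy => hy₀min hy
  -- bound on w''
  obtain ⟨y₁, hy₁mem, hy₁max⟩ := isCompact_Icc.exists_isMaxOn (s := Icc (0:ℝ) (2*π))
    (nonempty_Icc.mpr (le_of_lt h2π)) hcw''.abs.continuousOn
  set M₂ := |w'' y₁| with hM₂def
  have hM : ∀ y ∈ Icc 0 (2*π), |w'' y| ≤ M₂ := fun y hy => hy₁max hy
  have hM₂nn : 0 ≤ M₂ := abs_nonneg _
  -- uniform continuity scale ℓ
  obtain ⟨δ₁, hδ₁pos, hδ₁⟩ := Metric.uniformContinuousOn_iff.mp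
    (isCompact_Icc.uniformContinuousOn_of_continuous (s := Icc (0:ℝ) (2*π))
      hcw'.continuousOn) (ε/2) (by positivity)
  obtain ⟨δ₂, hδ₂pos, hδ₂⟩ := Metric.uniformContinuousOn_iff.mp
    (isCompact_Icc.uniformContinuousOn_of_continuous (s := Icc (0:ℝ) (2*π))
      hcw''.continuousOn) (ε/2) (by positivity)
  set ℓ := min δ₁ δ₂ / 2 with hℓdef
  have hℓpos : 0 < ℓ := by positivity
  have huc : ∀ x ∈ Icc 0 (2*π), ∀ y ∈ Icc 0 (2*π), |x - y| ≤ ℓ →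
      |w' x - w' y| ≤ ε/2 ∧ |w'' x - w'' y| ≤ ε/2 := by
    intro x hx y hy hxy
    have hd1 : dist x y < δ₁ := by
      rw [Real.dist_eq]
      calc |x - y| ≤ ℓ := hxy
        _ < δ₁ := by rw [hℓdef]; have := min_le_left δ₁ δ₂; linarith
    have hd2 : dist x y < δ₂ := by
      rw [Real.dist_eq]
      calc |x - y| ≤ ℓ := hxy
        _ < δ₂ := by rw [hℓdef]; have := min_le_right δ₁ δ₂; linarith
    constructor
    · have := hδ₁ x hx y hy hd1
      rw [Real.dist_eq] at this
      linarith
    · have := hδ₂ x hx y hy hd2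
      rw [Real.dist_eq] at this
      linarith
  -- number of pieces
  set N := ⌈2*π/ℓ⌉₊ with hNdef
  have hN : 2*π ≤ N * ℓ := by
    have := Nat.le_ceil (2*π/ℓ)
    rw [div_le_iff₀ hℓpos] at this
    exact this
  have hNpos : 0 < (N:ℝ) := by
    have : 0 < N := by
      rw [hNdef]
      apply Nat.ceil_pos.mpr
      positivity
    exact_mod_cast this
  set K := (4/ε + 4*M₂*ℓ/ε^2) + (2 + 12/ε) with hKdef
  have hKpos : 0 < K := by positivity
  -- amplitude constants
  set c₀ := Real.sqrt (2*π) / (2*π) + Real.sqrt (2*π) with hc₀def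
  have hc₀pos : 0 < c₀ := by positivity
  set CA := c₀^2 + 2 with hCAdef
  have hCApos : 0 < CA := by positivity
  -- decay constants
  set D := Real.sqrt (Real.sqrt (α^2+1) / |α|) with hDdef
  have hαpos : 0 < |α| := abs_pos.mpr hα
  have hDpos : 0 < D := by
    rw [hDdef]
    apply Real.sqrt_pos.mpr
    positivity
  set E := Real.sqrt (Real.sqrt (1 + (1/α)^2)) with hEdef
  have hEpos : 0 < E := by
    rw [hEdef]
    apply Real.sqrt_pos.mpr
    apply Real.sqrt_pos.mpr
    positivity
  set Chi := N * K * CA * D with hChidef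
  have hChipos : 0 < Chi := by positivity
  set Clo := 2*π * CA * E with hClodef
  have hClopos : 0 < Clo := by positivity
  refine ⟨Chi + Clo, by positivity, ?_⟩
  intro g g' φ φ' hcg hcg' hcφ hcφ' hdg hdφ hgp hφp hφ1 t ht
  set μ := -(α*t) with hμdef
  have habsμ : |μ| = |α| * t := by
    rw [hμdef, abs_neg, abs_mul, abs_of_nonneg ht]
  -- notation
  set Ng := Real.sqrt (∫ y in (0:ℝ)..(2*π), ‖g y‖^2 + ‖g' y‖^2) with hNgdef
  set Nφ := Real.sqrt (∫ y in (0:ℝ)..(2*π), ‖φ y‖^2 + ‖φ' y‖^2) with hNφdef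
  have hNgnn : 0 ≤ Ng := Real.sqrt_nonneg _
  have hNφnn : 0 ≤ Nφ := Real.sqrt_nonneg _
  -- L² pieces vs H¹ norms
  have l2le : ∀ (f f' : ℝ → ℂ), Continuous f → Continuous f' →
      Real.sqrt (∫ y in (0:ℝ)..(2*π), ‖f y‖^2) ≤
        Real.sqrt (∫ y in (0:ℝ)..(2*π), ‖f y‖^2 + ‖f' y‖^2) ∧
      Real.sqrt (∫ y in (0:ℝ)..(2*π), ‖f' y‖^2) ≤
        Real.sqrt (∫ y in (0:ℝ)..(2*π), ‖f y‖^2 + ‖f' y‖^2) := by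
    intro f f' hf hf'
    have hsum : ∫ y in (0:ℝ)..(2*π), ‖f y‖^2 + ‖f' y‖^2 =
        (∫ y in (0:ℝ)..(2*π), ‖f y‖^2) + ∫ y in (0:ℝ)..(2*π), ‖f' y‖^2 :=
      intervalIntegral.integral_add ((hf.norm.pow 2).intervalIntegrable _ _)
        ((hf'.norm.pow 2).intervalIntegrable _ _)
    have h1 : 0 ≤ ∫ y in (0:ℝ)..(2*π), ‖f y‖^2 :=
      intervalIntegral.integral_nonneg (le_of_lt h2π) (fun y _ => by positivity)
    have h2 : 0 ≤ ∫ y in (0:ℝ)..(2*π), ‖f' y‖^2 :=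
      intervalIntegral.integral_nonneg (le_of_lt h2π) (fun y _ => by positivity)
    constructor
    · apply Real.sqrt_le_sqrt; rw [hsum]; linarith
    · apply Real.sqrt_le_sqrt; rw [hsum]; linarith
  -- L¹ bound via Cauchy–Schwarz against 1
  have l1le : ∀ (f : ℝ → ℂ), Continuous f →
      ∫ y in (0:ℝ)..(2*π), ‖f y‖ ≤
        Real.sqrt (∫ y in (0:ℝ)..(2*π), ‖f y‖^2) * Real.sqrt (2*π) := by
    intro f hf
    have := cs_int (fun y => ‖f y‖) (fun _ => 1) 0 (2*π) (le_of_lt h2π)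
      hf.norm continuous_const (fun y => norm_nonneg _) (fun _ => zero_le_one)
    simp only [mul_one, one_pow] at this
    rw [intervalIntegral.integral_const, smul_eq_mul, sub_zero, mul_one] at this
    exact this
  -- sup bounds
  have hsupaux : ∀ (f f' : ℝ → ℂ), Continuous f → Continuous f' →
      (∀ y, HasDerivAt f (f' y) y) →
      ∀ y ∈ Icc (0:ℝ) (2*π), ‖f y‖ ≤
        c₀ * Real.sqrt (∫ s in (0:ℝ)..(2*π), ‖f s‖^2 + ‖f' s‖^2) := by
    intro f f' hf hf' hd y hy
    set Nf := Real.sqrt (∫ s in (0:ℝ)..(2*π), ‖f s‖^2 + ‖f' s‖^2) with hNf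
    refine le_trans (sup_bound f f' hf hf' hd y hy) ?_
    have hs2π : (0:ℝ) ≤ Real.sqrt (2*π) := Real.sqrt_nonneg _
    have e1 : ∫ s in (0:ℝ)..(2*π), ‖f s‖ ≤ Nf * Real.sqrt (2*π) :=
      le_trans (l1le f hf) (mul_le_mul_of_nonneg_right (l2le f f' hf hf').1 hs2π)
    have e2 : ∫ s in (0:ℝ)..(2*π), ‖f' s‖ ≤ Nf * Real.sqrt (2*π) :=
      le_trans (l1le f' hf') (mul_le_mul_of_nonneg_right (l2le f f' hf hf').2 hs2π)
    calc (∫ s in (0:ℝ)..(2*π), ‖f s‖) / (2*π) + ∫ s in (0:ℝ)..(2*π), ‖f' s‖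
        ≤ (Nf * Real.sqrt (2*π)) / (2*π) + Nf * Real.sqrt (2*π) := by gcongr
      _ = c₀ * Nf := by rw [hc₀def]; field_simp
  have hsupg : ∀ y ∈ Icc (0:ℝ) (2*π), ‖g y‖ ≤ c₀ * Ng :=
    fun y hy => hsupaux g g' hcg hcg' hdg y hy
  have hsupφ : ∀ y ∈ Icc (0:ℝ) (2*π), ‖φ y‖ ≤ c₀ := by
    intro y hy
    refine le_trans (hsupaux φ φ' hcφ hcφ' hdφ y hy) ?_
    calc c₀ * Real.sqrt (∫ s in (0:ℝ)..(2*π), ‖φ s‖^2 + ‖φ' s‖^2)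
        ≤ c₀ * 1 := mul_le_mul_of_nonneg_left hφ1 (le_of_lt hc₀pos)
      _ = c₀ := mul_one _
  -- the product h = g * φ and its derivative
  set h : ℝ → ℂ := fun y => g y * φ y with hhdef
  set h' : ℝ → ℂ := fun y => g' y * φ y + g y * φ' y with hh'def
  have hdh : ∀ y, HasDerivAt h (h' y) y := fun y => (hdg y).mul (hdφ y)
  have hch : Continuous h := hcg.mul hcφ
  have hch' : Continuous h' := (hcg'.mul hcφ).add (hcg.mul hcφ')
  -- amplitude bound
  have hampl : ‖h (2*π)‖ + (∫ y in (0:ℝ)..(2*π), ‖h' y‖) ≤ CA * Ng := by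
    have hmem : (2*π) ∈ Icc (0:ℝ) (2*π) := ⟨le_of_lt h2π, le_refl _⟩
    have e1 : ‖h (2*π)‖ ≤ c₀^2 * Ng := by
      rw [hhdef]
      simp only [norm_mul]
      calc ‖g (2*π)‖ * ‖φ (2*π)‖ ≤ (c₀ * Ng) * c₀ :=
            mul_le_mul (hsupg _ hmem) (hsupφ _ hmem) (norm_nonneg _) (by positivity)
        _ = c₀^2 * Ng := by ring
    have e2 : (∫ y in (0:ℝ)..(2*π), ‖h' y‖) ≤ 2 * Ng := by
      have hpt : ∀ y, ‖h' y‖ ≤ ‖g' y‖ * ‖φ y‖ + ‖g y‖ * ‖φ' y‖ := by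
        intro y
        rw [hh'def]
        refine le_trans (norm_add_le _ _) ?_
        rw [norm_mul, norm_mul]
      have estep : (∫ y in (0:ℝ)..(2*π), ‖h' y‖)
          ≤ ∫ y in (0:ℝ)..(2*π), (‖g' y‖ * ‖φ y‖ + ‖g y‖ * ‖φ' y‖) := by
        apply intervalIntegral.integral_mono_on (le_of_lt h2π)
          (hch'.norm.intervalIntegrable _ _)
          (((hcg'.norm.mul hcφ.norm).add (hcg.norm.mul hcφ'.norm)).intervalIntegrable _ _)
        intro y _
        exact hpt y
      have esplit : ∫ y in (0:ℝ)..(2*π), (‖g' y‖ * ‖φ y‖ + ‖g y‖ * ‖φ' y‖)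
          = (∫ y in (0:ℝ)..(2*π), ‖g' y‖ * ‖φ y‖) + ∫ y in (0:ℝ)..(2*π), ‖g y‖ * ‖φ' y‖ :=
        intervalIntegral.integral_add ((hcg'.norm.mul hcφ.norm).intervalIntegrable _ _)
          ((hcg.norm.mul hcφ'.norm).intervalIntegrable _ _)
      have cs1 : (∫ y in (0:ℝ)..(2*π), ‖g' y‖ * ‖φ y‖) ≤ Ng * 1 := by
        refine le_trans (cs_int _ _ _ _ (le_of_lt h2π) hcg'.norm hcφ.norm
          (fun y => norm_nonneg _) (fun y => norm_nonneg _)) ?_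
        apply mul_le_mul ((l2le g g' hcg hcg').2)
          (le_trans (l2le φ φ' hcφ hcφ').1 hφ1) (Real.sqrt_nonneg _) hNgnn
      have cs2 : (∫ y in (0:ℝ)..(2*π), ‖g y‖ * ‖φ' y‖) ≤ Ng * 1 := by
        refine le_trans (cs_int _ _ _ _ (le_of_lt h2π) hcg.norm hcφ'.norm
          (fun y => norm_nonneg _) (fun y => norm_nonneg _)) ?_
        apply mul_le_mul ((l2le g g' hcg hcg').1)
          (le_trans (l2le φ φ' hcφ hcφ').2 hφ1) (Real.sqrt_nonneg _) hNgnn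
      rw [esplit] at estep
      linarith
    have hexp : CA * Ng = c₀^2 * Ng + 2 * Ng := by rw [hCAdef]; ring
    rw [hexp]
    linarith
  -- integration by parts against the primitive P of the oscillatory factor
  have hee_cont : Continuous (ee w μ) := ee_cont hcw μ
  set P : ℝ → ℂ := fun z => ∫ y in (0:ℝ)..z, ee w μ y with hPdef
  have hPder : ∀ z, HasDerivAt P (ee w μ z) z := by
    intro z
    exact intervalIntegral.integral_hasDerivAt_right (hee_cont.intervalIntegrable _ _)
      (hee_cont.stronglyMeasurableAtFilter _ _) hee_cont.continuousAt
  have hPcont : Continuous P := by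
    have : Differentiable ℝ P := fun z => (hPder z).differentiableAt
    exact this.continuous
  have hibp : ∫ y in (0:ℝ)..(2*π), ee w μ y * h y
      = P (2*π) * h (2*π) - ∫ y in (0:ℝ)..(2*π), P y * h' y := by
    have hG : ∀ z ∈ Set.uIcc (0:ℝ) (2*π), HasDerivAt (fun z => P z * h z)
        (ee w μ z * h z + P z * h' z) z := fun z _ => (hPder z).mul (hdh z)
    have hint1 : IntervalIntegrable (fun y => ee w μ y * h y) volume 0 (2*π) :=
      (hee_cont.mul hch).intervalIntegrable _ _
    have hint2 : IntervalIntegrable (fun y => P y * h' y) volume 0 (2*π) :=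
      (hPcont.mul hch').intervalIntegrable _ _
    have hftc : ∫ y in (0:ℝ)..(2*π), (ee w μ y * h y + P y * h' y)
        = P (2*π) * h (2*π) - P 0 * h 0 :=
      intervalIntegral.integral_eq_sub_of_hasDerivAt hG (hint1.add hint2)
    have hP0 : P 0 = 0 := by rw [hPdef]; simp
    rw [intervalIntegral.integral_add hint1 hint2, hP0, zero_mul, sub_zero] at hftc
    rw [eq_sub_iff_add_eq]
    exact hftc
  -- master estimate given a uniform bound on P
  have key : ∀ S : ℝ, 0 ≤ S → (∀ z ∈ Icc (0:ℝ) (2*π), ‖P z‖ ≤ S) →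
      ‖∫ y in (0:ℝ)..(2*π), ee w μ y * h y‖ ≤ S * (CA * Ng) := by
    intro S hS hPb
    rw [hibp]
    have e1 : ‖∫ y in (0:ℝ)..(2*π), P y * h' y‖ ≤ S * ∫ y in (0:ℝ)..(2*π), ‖h' y‖ := by
      refine le_trans (intervalIntegral.norm_integral_le_integral_norm (le_of_lt h2π)) ?_
      rw [← intervalIntegral.integral_const_mul]
      apply intervalIntegral.integral_mono_on (le_of_lt h2π)
        ((hPcont.mul hch').norm.intervalIntegrable _ _)
        ((continuous_const.mul hch'.norm).intervalIntegrable _ _)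
      intro y hy
      simp only [Pi.mul_apply, norm_mul]
      exact mul_le_mul_of_nonneg_right (hPb y hy) (norm_nonneg _)
    calc ‖P (2*π) * h (2*π) - ∫ y in (0:ℝ)..(2*π), P y * h' y‖
        ≤ ‖P (2*π) * h (2*π)‖ + ‖∫ y in (0:ℝ)..(2*π), P y * h' y‖ := norm_sub_le _ _
      _ ≤ S * ‖h (2*π)‖ + S * ∫ y in (0:ℝ)..(2*π), ‖h' y‖ := by
          gcongr
          rw [norm_mul]
          exact mul_le_mul_of_nonneg_right (hPb _ ⟨le_of_lt h2π, le_refl _⟩) (norm_nonneg _)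
      _ = S * (‖h (2*π)‖ + ∫ y in (0:ℝ)..(2*π), ‖h' y‖) := by ring
      _ ≤ S * (CA * Ng) := mul_le_mul_of_nonneg_left hampl hS
  -- rewrite the original integrand
  have hint_eq : (∫ y in (0:ℝ)..(2*π),
      Complex.exp (-Complex.I * (α:ℂ) * (w y : ℂ) * (t:ℂ)) * g y * φ y)
      = ∫ y in (0:ℝ)..(2*π), ee w μ y * h y := by
    apply intervalIntegral.integral_congr
    intro y _
    show Complex.exp (-Complex.I * (α:ℂ) * (w y : ℂ) * (t:ℂ)) * g y * φ y
        = Complex.exp (Complex.I * ((-(α*t) : ℝ) : ℂ) * (w y : ℂ)) * (g y * φ y)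
    rw [mul_assoc]
    congr 2
    push_cast
    ring
  rw [hint_eq]
  -- quarter power as nested square roots
  have hquarter : (1 + t^2) ^ (-(1/4:ℝ)) = (Real.sqrt (Real.sqrt (1 + t^2)))⁻¹ :=
    quarter_pow _ (by positivity)
  have hssq_pos : 0 < Real.sqrt (Real.sqrt (1 + t^2)) := by
    apply Real.sqrt_pos.mpr; apply Real.sqrt_pos.mpr; positivity
  by_cases hbig : 1 ≤ |α| * t
  · -- oscillatory regime
    have hμ1 : 1 ≤ |μ| := by rw [habsμ]; exact hbig
    have hμ0 : μ ≠ 0 := by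
      intro hz; rw [hz] at hμ1; simp at hμ1; linarith
    have hsqμ : 0 < Real.sqrt |μ| := Real.sqrt_pos.mpr (abs_pos.mpr hμ0)
    have hPb : ∀ z ∈ Icc (0:ℝ) (2*π), ‖P z‖ ≤ N * (K / Real.sqrt |μ|) := by
      intro z hz
      rw [hPdef]
      exact osc_cover w w' w'' ε ℓ M₂ hw' hw'' hcw' hcw'' hεpos hℓpos hM₂nn hdich hM huc
        N 0 z μ (le_refl 0) hz.2 hz.1 (by rw [sub_zero]; linarith [hz.2, hN]) hμ1
    have hstep := key (N * (K / Real.sqrt |μ|)) (by positivity) hPb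
    refine le_trans hstep ?_
    rw [hquarter]
    -- compare √√(1+t²) with D √(|α| t)
    have htpos : 0 < t := by
      rcases lt_or_ge 0 t with h | h
      · exact h
      · exfalso; have : t = 0 := le_antisymm h ht; rw [this] at hbig; simp at hbig; linarith
    have hcomp : Real.sqrt (Real.sqrt (1 + t^2)) ≤ D * Real.sqrt (|α| * t) := by
      have h1 : 1 + t^2 ≤ (α^2 + 1) * t^2 := by
        have hsq := mul_le_mul hbig hbig (by norm_num) (le_trans (by norm_num) hbig)
        have e : |α| * t * (|α| * t) = α^2 * t^2 := by
          rw [← sq_abs α]; ring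
        rw [one_mul, e] at hsq
        have e2 : (α^2+1)*t^2 = α^2*t^2 + t^2 := by ring
        linarith
      have h2 : Real.sqrt (1 + t^2) ≤ Real.sqrt (α^2+1) * t := by
        refine le_trans (Real.sqrt_le_sqrt h1) ?_
        rw [Real.sqrt_mul (by positivity), Real.sqrt_sq (le_of_lt htpos)]
      have h3 : D * Real.sqrt (|α| * t) = Real.sqrt (Real.sqrt (α^2+1) * t) := by
        rw [hDdef, ← Real.sqrt_mul (by positivity)]
        congr 1
        field_simp
      rw [h3]
      exact Real.sqrt_le_sqrt h2
    have hsqq : 0 < Real.sqrt (|α| * t) := Real.sqrt_pos.mpr (by positivity)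
    have hmono : (Real.sqrt (|α| * t))⁻¹ ≤ D * (Real.sqrt (Real.sqrt (1+t^2)))⁻¹ := by
      have hd1 : 1/(D * Real.sqrt (|α| * t)) ≤ 1/(Real.sqrt (Real.sqrt (1+t^2))) :=
        one_div_le_one_div_of_le hssq_pos hcomp
      have e : (Real.sqrt (|α| * t))⁻¹ = D * (1/(D * Real.sqrt (|α| * t))) := by
        field_simp
      rw [e, inv_eq_one_div (Real.sqrt (Real.sqrt (1+t^2)))]
      exact mul_le_mul_of_nonneg_left hd1 (le_of_lt hDpos)
    have hmain : (N:ℝ) * (K / Real.sqrt |μ|) * CA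
        ≤ Chi * (Real.sqrt (Real.sqrt (1+t^2)))⁻¹ := by
      rw [hChidef, habsμ]
      calc (N:ℝ) * (K / Real.sqrt (|α| * t)) * CA
          = ((N:ℝ) * K * CA) * (Real.sqrt (|α| * t))⁻¹ := by
            rw [div_eq_mul_inv]; ring
        _ ≤ ((N:ℝ) * K * CA) * (D * (Real.sqrt (Real.sqrt (1+t^2)))⁻¹) :=
            mul_le_mul_of_nonneg_left hmono (by positivity)
        _ = (N:ℝ) * K * CA * D * (Real.sqrt (Real.sqrt (1+t^2)))⁻¹ := by ring
    have hfinal : (N:ℝ) * (K / Real.sqrt |μ|) * (CA * Ng)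
        ≤ (Chi * (Real.sqrt (Real.sqrt (1+t^2)))⁻¹) * Ng := by
      calc (N:ℝ) * (K / Real.sqrt |μ|) * (CA * Ng)
          = ((N:ℝ) * (K / Real.sqrt |μ|) * CA) * Ng := by ring
        _ ≤ (Chi * (Real.sqrt (Real.sqrt (1+t^2)))⁻¹) * Ng :=
            mul_le_mul_of_nonneg_right hmain hNgnn
    refine le_trans hfinal ?_
    have hrest : 0 ≤ (Real.sqrt (Real.sqrt (1+t^2)))⁻¹ * Ng := by positivity
    have hexp : (Chi + Clo) * (Real.sqrt (Real.sqrt (1+t^2)))⁻¹ * Ng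
        = Chi * (Real.sqrt (Real.sqrt (1+t^2)))⁻¹ * Ng
          + Clo * ((Real.sqrt (Real.sqrt (1+t^2)))⁻¹ * Ng) := by ring
    rw [hexp]
    have := mul_nonneg (le_of_lt hClopos) hrest
    linarith
  · -- bounded regime
    push_neg at hbig
    have hPb : ∀ z ∈ Icc (0:ℝ) (2*π), ‖P z‖ ≤ 2*π := by
      intro z hz
      rw [hPdef]
      have := intervalIntegral.norm_integral_le_of_norm_le_const (C := 1)
        (f := ee w μ) (a := (0:ℝ)) (b := z) (fun x _ => le_of_eq (ee_norm w μ x))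
      refine le_trans this ?_
      rw [sub_zero, abs_of_nonneg hz.1, one_mul]
      exact hz.2
    have hstep := key (2*π) (le_of_lt h2π) hPb
    refine le_trans hstep ?_
    rw [hquarter]
    have hE : Real.sqrt (Real.sqrt (1 + t^2)) ≤ E := by
      rw [hEdef]
      apply Real.sqrt_le_sqrt
      apply Real.sqrt_le_sqrt
      have : t^2 ≤ (1/α)^2 := by
        rw [div_pow, one_pow]
        rw [le_div_iff₀ (by positivity)]
        have : (|α| * t)^2 ≤ 1 := by nlinarith [mul_nonneg (le_of_lt hαpos) ht]
        nlinarith [sq_abs α]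
      linarith
    have hmain : 2*π * (CA * Ng) ≤ (Clo * (Real.sqrt (Real.sqrt (1+t^2)))⁻¹) * Ng := by
      rw [hClodef]
      have hone : 1 ≤ E * (Real.sqrt (Real.sqrt (1+t^2)))⁻¹ := by
        rw [← div_eq_mul_inv]
        exact (one_le_div hssq_pos).mpr hE
      have : 2*π * CA ≤ 2*π*CA*E * (Real.sqrt (Real.sqrt (1+t^2)))⁻¹ := by
        calc 2*π * CA = (2*π*CA) * 1 := by ring
          _ ≤ (2*π*CA) * (E * (Real.sqrt (Real.sqrt (1+t^2)))⁻¹) :=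
              mul_le_mul_of_nonneg_left hone (by positivity)
          _ = 2*π*CA*E * (Real.sqrt (Real.sqrt (1+t^2)))⁻¹ := by ring
      calc 2*π * (CA * Ng) = (2*π * CA) * Ng := by ring
        _ ≤ (2*π*CA*E * (Real.sqrt (Real.sqrt (1+t^2)))⁻¹) * Ng :=
            mul_le_mul_of_nonneg_right this hNgnn
    refine le_trans hmain ?_
    have hrest : 0 ≤ (Real.sqrt (Real.sqrt (1+t^2)))⁻¹ * Ng := by positivity
    have hexp : (Chi + Clo) * (Real.sqrt (Real.sqrt (1+t^2)))⁻¹ * Ng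
        = Chi * ((Real.sqrt (Real.sqrt (1+t^2)))⁻¹ * Ng)
          + Clo * (Real.sqrt (Real.sqrt (1+t^2)))⁻¹ * Ng := by ring
    rw [hexp]
    have := mul_nonneg (le_of_lt hChipos) hrest
    linarith
end

section
/- Let H : [y₀, y₂] → ℂ be continuous with H(y) ≠ 0 for all y, and suppose |H(y'')| ≤ |H(y')| whenever y₀ ≤ y'' ≤ y' (monotone modulus). Fix y_r ∈ [y₀,y₂] and A > 0 and define (S₁ f)(y) := (1/H(y)) ∫_{y_r}^y H(y'') f(y'') dy''. Then in the weighted norm ‖f‖_X := sup_y |f(y)|/cosh(A(y−y_r)) one has ‖S₁ f‖_X ≤ (C/A)‖f‖_X with C independent of A. Consequently the composed operator S = S₀ ∘ S₁ satisfies ‖S f‖_X ≤ (C/A²)‖f‖_X. -/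
open MeasureTheory

lemma abs_sinh_le_cosh (x : ℝ) : |Real.sinh x| ≤ Real.cosh x := by
  rw [abs_le]
  constructor <;> nlinarith [Real.cosh_sq x, Real.cosh_pos x]

lemma cosh_int (yr y A : ℝ) (hA : 0 < A) :
    ∫ t in yr..y, Real.cosh (A * (t - yr)) = Real.sinh (A * (y - yr)) / A := by
  have hd : ∀ t ∈ Set.uIcc yr y,
      HasDerivAt (fun t => Real.sinh (A * (t - yr)) / A) (Real.cosh (A * (t - yr))) t := by
    intro t _
    have h1 : HasDerivAt (fun x => A * (x - yr)) (A * 1) t :=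
      ((hasDerivAt_id t).sub_const yr).const_mul A
    have h2 := (Real.hasDerivAt_sinh (A * (t - yr))).comp t h1
    have h3 := h2.div_const A
    simpa [mul_comm, mul_div_assoc, hA.ne'] using h3
  have hint : IntervalIntegrable (fun t => Real.cosh (A * (t - yr))) volume yr y :=
    ((Real.continuous_cosh).comp
      (continuous_const.mul (continuous_id.sub continuous_const))).intervalIntegrable yr y
  rw [intervalIntegral.integral_eq_sub_of_hasDerivAt hd hint]
  simp

lemma key (yr y A X : ℝ) (hA : 0 < A) (hX : 0 ≤ X) (g : ℝ → ℂ)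
    (hb : ∀ t ∈ Set.uIoc yr y, ‖g t‖ ≤ X * Real.cosh (A * (t - yr))) :
    ‖∫ t in yr..y, g t‖ ≤ (X / A) * Real.cosh (A * (y - yr)) := by
  have hint : IntervalIntegrable (fun t => X * Real.cosh (A * (t - yr))) volume yr y :=
    (Continuous.mul continuous_const ((Real.continuous_cosh).comp
      (continuous_const.mul (continuous_id.sub continuous_const)))).intervalIntegrable yr y
  have h1 := intervalIntegral.norm_integral_le_abs_of_norm_le
    ((ae_restrict_mem measurableSet_uIoc).mono hb) hint
  have h2 : ∫ t in yr..y, X * Real.cosh (A * (t - yr))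
      = X * (Real.sinh (A * (y - yr)) / A) := by
    rw [intervalIntegral.integral_const_mul, cosh_int yr y A hA]
  rw [h2] at h1
  refine h1.trans ?_
  rw [abs_mul, abs_div, abs_of_pos hA, abs_of_nonneg hX, div_mul_eq_mul_div, mul_div_assoc]
  gcongr
  exact abs_sinh_le_cosh _

/-- Weighted estimate for the Sturmian integral operator
`S₁f(y) = H(y)⁻¹ ∫_{y_r}^y H f` under the monotone-modulus condition
(`|H(y'')| ≤ |H(y)|` for `y''` between `y_r` and `y`): `‖S₁f‖_X ≤ (C/A)‖f‖_X`,
and for the composition `S = S₀ ∘ S₁`, `‖Sf‖_X ≤ (C/A²)‖f‖_X`. -/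
theorem stmt_9 :
    ∃ C > 0, ∀ (y0 y2 yr A : ℝ) (H : ℝ → ℂ) (f : ℝ → ℂ) (X : ℝ),
      y0 ≤ yr → yr ≤ y2 → 0 < A → 0 ≤ X →
      Continuous H → Continuous f →
      (∀ y ∈ Set.Icc y0 y2, H y ≠ 0) →
      (∀ y ∈ Set.Icc y0 y2, ∀ y'' ∈ Set.uIcc yr y, ‖H y''‖ ≤ ‖H y‖) →
      (∀ y ∈ Set.Icc y0 y2, ‖f y‖ ≤ X * Real.cosh (A * (y - yr))) →
      (∀ y ∈ Set.Icc y0 y2,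
        ‖(H y)⁻¹ * ∫ t in yr..y, H t * f t‖ ≤ (C / A) * X * Real.cosh (A * (y - yr)))
      ∧
      (∀ y ∈ Set.Icc y0 y2,
        ‖∫ s in yr..y, (H s)⁻¹ * ∫ t in yr..s, H t * f t‖
          ≤ (C / A ^ 2) * X * Real.cosh (A * (y - yr))) := by
  refine ⟨1, one_pos, fun y0 y2 yr A H f X h0r hr2 hA hX hH hf hHne hmono hfb => ?_⟩
  have hyr : yr ∈ Set.Icc y0 y2 := ⟨h0r, hr2⟩
  have part1 : ∀ y ∈ Set.Icc y0 y2,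
      ‖(H y)⁻¹ * ∫ t in yr..y, H t * f t‖ ≤ (1 / A) * X * Real.cosh (A * (y - yr)) := by
    intro y hy
    have hsub : Set.uIcc yr y ⊆ Set.Icc y0 y2 := Set.uIcc_subset_Icc hyr hy
    have hHy : (0:ℝ) < ‖H y‖ := norm_pos_iff.mpr (hHne y hy)
    have hb : ∀ t ∈ Set.uIoc yr y, ‖H t * f t‖ ≤ (‖H y‖ * X) * Real.cosh (A * (t - yr)) := by
      intro t ht
      have ht' : t ∈ Set.uIcc yr y := Set.uIoc_subset_uIcc ht
      have := mul_le_mul (hmono y hy t ht') (hfb t (hsub ht')) (norm_nonneg _)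
        (norm_nonneg _)
      calc ‖H t * f t‖ = ‖H t‖ * ‖f t‖ := norm_mul _ _
        _ ≤ ‖H y‖ * (X * Real.cosh (A * (t - yr))) := this
        _ = (‖H y‖ * X) * Real.cosh (A * (t - yr)) := by ring
    have hk := key yr y A (‖H y‖ * X) hA (mul_nonneg hHy.le hX) _ hb
    rw [norm_mul, norm_inv]
    calc ‖H y‖⁻¹ * ‖∫ t in yr..y, H t * f t‖
        ≤ ‖H y‖⁻¹ * ((‖H y‖ * X / A) * Real.cosh (A * (y - yr))) := by
          gcongr
      _ = (1 / A) * X * Real.cosh (A * (y - yr)) := by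
          rw [show ‖H y‖ * X / A * Real.cosh (A * (y - yr))
              = ‖H y‖ * ((1 / A) * X * Real.cosh (A * (y - yr))) by ring,
            ← mul_assoc, inv_mul_cancel₀ hHy.ne', one_mul]
  refine ⟨part1, fun y hy => ?_⟩
  have hsub : Set.uIcc yr y ⊆ Set.Icc y0 y2 := Set.uIcc_subset_Icc hyr hy
  have hb : ∀ s ∈ Set.uIoc yr y,
      ‖(H s)⁻¹ * ∫ t in yr..s, H t * f t‖ ≤ (X / A) * Real.cosh (A * (s - yr)) := by
    intro s hs
    have := part1 s (hsub (Set.uIoc_subset_uIcc hs))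
    calc ‖(H s)⁻¹ * ∫ t in yr..s, H t * f t‖
        ≤ (1 / A) * X * Real.cosh (A * (s - yr)) := this
      _ = (X / A) * Real.cosh (A * (s - yr)) := by ring
  have hk := key yr y A (X / A) hA (div_nonneg hX hA.le) _ hb
  calc ‖∫ s in yr..y, (H s)⁻¹ * ∫ t in yr..s, H t * f t‖
      ≤ (X / A / A) * Real.cosh (A * (y - yr)) := hk
    _ = (1 / A ^ 2) * X * Real.cosh (A * (y - yr)) := by ring
end

section
/- Let b : 𝕋 → ℝ be continuous and positive, and let (Ĥ₁, Ĥ₂) satisfy the divergence-free relation iα Ĥ₁ + ∂y Ĥ₂ = 0 on a finite interval [y₁,y₂] with Ĥ₂(y₁)=Ĥ₂(y₂)=0. Then there is a constant C > 0, independent of α ≠ 0, such that C^{-1}‖Ĥ₁‖_{L²} ≤ ‖Ĥ₁ − i(αb)^{-1} b' Ĥ₂‖_{L²} ≤ C‖Ĥ₁‖_{L²}. -/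
open MeasureTheory

lemma aux_cs (y1 y2 : ℝ) (hy : y1 < y2) (g : ℝ → ℝ)
    (hg : ContinuousOn g (Set.Icc y1 y2)) :
    (∫ y in y1..y2, g y) ^ 2 ≤ (y2 - y1) * ∫ y in y1..y2, g y ^ 2 := by
  have hL : (0:ℝ) < y2 - y1 := by linarith
  have huIcc : Set.uIcc y1 y2 = Set.Icc y1 y2 := Set.uIcc_of_le hy.le
  have hint : IntervalIntegrable g volume y1 y2 := (huIcc ▸ hg).intervalIntegrable
  have hint2 : IntervalIntegrable (fun y => g y ^ 2) volume y1 y2 :=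
    (huIcc ▸ (hg.pow 2)).intervalIntegrable
  set A := ∫ y in y1..y2, g y with hA
  set B := ∫ y in y1..y2, g y ^ 2 with hB
  set c := A / (y2 - y1) with hc
  have key : 0 ≤ ∫ y in y1..y2, (g y - c) ^ 2 :=
    intervalIntegral.integral_nonneg hy.le (fun u _ => sq_nonneg _)
  have expand : ∫ y in y1..y2, (g y - c) ^ 2 = B - 2 * c * A + (y2 - y1) * c ^ 2 := by
    have e : ∀ y, (g y - c) ^ 2 = (g y ^ 2 - (2 * c) * g y) + c ^ 2 := fun y => by ring
    rw [intervalIntegral.integral_congr (g := fun y => (g y ^ 2 - (2 * c) * g y) + c ^ 2)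
      (fun y _ => e y)]
    rw [intervalIntegral.integral_add (hint2.sub (hint.const_mul _)) intervalIntegrable_const,
      intervalIntegral.integral_sub hint2 (hint.const_mul _),
      intervalIntegral.integral_const_mul, intervalIntegral.integral_const]
    simp only [smul_eq_mul, ← hA, ← hB]
  rw [expand] at key
  have e2 : B - 2 * c * A + (y2 - y1) * c ^ 2 = B - A ^ 2 / (y2 - y1) := by
    rw [hc]; field_simp; ring
  rw [e2] at key
  have := (div_le_iff₀ hL).mp (by linarith : A ^ 2 / (y2 - y1) ≤ B)
  linarith

lemma aux_poincare (y1 y2 : ℝ) (hy : y1 < y2) (f f' : ℝ → ℂ)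
    (hf : ∀ y ∈ Set.Icc y1 y2, HasDerivAt f (f' y) y)
    (hc : ContinuousOn f' (Set.Icc y1 y2)) (h0 : f y1 = 0) :
    ∫ y in y1..y2, ‖f y‖ ^ 2 ≤ (y2 - y1) ^ 2 * ∫ y in y1..y2, ‖f' y‖ ^ 2 := by
  have hL : (0:ℝ) < y2 - y1 := by linarith
  have huIcc : Set.uIcc y1 y2 = Set.Icc y1 y2 := Set.uIcc_of_le hy.le
  set S := ∫ t in y1..y2, ‖f' t‖ with hS
  set Q := ∫ t in y1..y2, ‖f' t‖ ^ 2 with hQ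
  have hS2 : S ^ 2 ≤ (y2 - y1) * Q := aux_cs y1 y2 hy _ hc.norm
  have hfc : ContinuousOn f (Set.Icc y1 y2) :=
    fun y hy' => ((hf y hy').continuousAt).continuousWithinAt
  have hbound : ∀ y ∈ Set.Icc y1 y2, ‖f y‖ ≤ S := by
    intro y hy'
    have hy1y : y1 ≤ y := hy'.1
    have hsub : Set.uIcc y1 y ⊆ Set.Icc y1 y2 := by
      rw [Set.uIcc_of_le hy1y]; exact Set.Icc_subset_Icc le_rfl hy'.2
    have hint' : IntervalIntegrable f' volume y1 y := (hc.mono hsub).intervalIntegrable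
    have ftc : ∫ t in y1..y, f' t = f y - f y1 :=
      intervalIntegral.integral_eq_sub_of_hasDerivAt (fun t ht => hf t (hsub ht)) hint'
    have hsub2 : Set.uIcc y y2 ⊆ Set.Icc y1 y2 := by
      rw [Set.uIcc_of_le hy'.2]; exact Set.Icc_subset_Icc hy1y le_rfl
    have h1 : IntervalIntegrable (fun t => ‖f' t‖) volume y1 y :=
      ((hc.norm).mono hsub).intervalIntegrable
    have h2 : IntervalIntegrable (fun t => ‖f' t‖) volume y y2 :=
      ((hc.norm).mono hsub2).intervalIntegrable
    have hadd := intervalIntegral.integral_add_adjacent_intervals h1 h2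
    have hnn : 0 ≤ ∫ t in y..y2, ‖f' t‖ :=
      intervalIntegral.integral_nonneg hy'.2 (fun u _ => norm_nonneg _)
    calc ‖f y‖ = ‖∫ t in y1..y, f' t‖ := by rw [ftc, h0, sub_zero]
      _ ≤ ∫ t in y1..y, ‖f' t‖ := intervalIntegral.norm_integral_le_integral_norm hy1y
      _ ≤ S := by rw [hS]; linarith
  have hSnn : 0 ≤ S :=
    intervalIntegral.integral_nonneg hy.le (fun u _ => norm_nonneg _)
  have hintf2 : IntervalIntegrable (fun y => ‖f y‖ ^ 2) volume y1 y2 :=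
    (huIcc ▸ ((hfc.norm).pow 2)).intervalIntegrable
  have h3 : ∫ y in y1..y2, ‖f y‖ ^ 2 ≤ ∫ _y in y1..y2, S ^ 2 := by
    apply intervalIntegral.integral_mono_on hy.le hintf2 intervalIntegrable_const
    intro y hy'
    have := hbound y hy'
    nlinarith [norm_nonneg (f y)]
  rw [intervalIntegral.integral_const, smul_eq_mul] at h3
  nlinarith

lemma add_sq_le_two (x z : ℝ) : (x + z) ^ 2 ≤ 2 * x ^ 2 + 2 * z ^ 2 := by
  nlinarith [sq_nonneg (x - z)]

set_option maxHeartbeats 1000000 in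
theorem stmt_15
    (y1 y2 : ℝ) (hy : y1 < y2)
    (b b' : ℝ → ℝ)
    (hb : ∀ y ∈ Set.Icc y1 y2, HasDerivAt b (b' y) y)
    (hbpos : ∀ y ∈ Set.Icc y1 y2, 0 < b y)
    (hb'c : ContinuousOn b' (Set.Icc y1 y2)) :
    ∃ C > 0, ∀ (α : ℝ), α ≠ 0 → ∀ (H1 H2 H2' : ℝ → ℂ),
      Continuous H1 → Continuous H2 → Continuous H2' →
      (∀ y ∈ Set.Icc y1 y2, HasDerivAt H2 (H2' y) y) →
      (∀ y ∈ Set.Icc y1 y2, Complex.I * (α : ℂ) * H1 y + H2' y = 0) →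
      H2 y1 = 0 → H2 y2 = 0 →
      C⁻¹ * Real.sqrt (∫ y in y1..y2, ‖H1 y‖ ^ 2)
          ≤ Real.sqrt (∫ y in y1..y2,
              ‖H1 y - Complex.I / ((α : ℂ) * (b y : ℂ)) * (b' y : ℂ) * H2 y‖ ^ 2)
        ∧
      Real.sqrt (∫ y in y1..y2,
              ‖H1 y - Complex.I / ((α : ℂ) * (b y : ℂ)) * (b' y : ℂ) * H2 y‖ ^ 2)
          ≤ C * Real.sqrt (∫ y in y1..y2, ‖H1 y‖ ^ 2) := by
  have huIcc : Set.uIcc y1 y2 = Set.Icc y1 y2 := Set.uIcc_of_le hy.le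
  have hL : (0:ℝ) < y2 - y1 := by linarith
  have hbc : ContinuousOn b (Set.Icc y1 y2) :=
    fun y hy' => ((hb y hy').continuousAt).continuousWithinAt
  have hne : (Set.Icc y1 y2).Nonempty := ⟨y1, Set.left_mem_Icc.mpr hy.le⟩
  obtain ⟨xm, hxm, hxmle⟩ := isCompact_Icc.exists_isMinOn hne hbc
  obtain ⟨xM, hxM, hxMge⟩ := isCompact_Icc.exists_isMaxOn hne hbc
  obtain ⟨xB, hxB, hxBge⟩ := isCompact_Icc.exists_isMaxOn hne hb'c.abs
  set L := y2 - y1 with hLdef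
  set m := b xm with hm
  set Mb := b xM with hMbdef
  set Mb' := |b' xB| with hMb'def
  have hmpos : 0 < m := hbpos xm hxm
  have hmle : ∀ y ∈ Set.Icc y1 y2, m ≤ b y := fun y hy' => isMinOn_iff.mp hxmle y hy'
  have hMble : ∀ y ∈ Set.Icc y1 y2, b y ≤ Mb := fun y hy' => isMaxOn_iff.mp hxMge y hy'
  have hMb'le : ∀ y ∈ Set.Icc y1 y2, |b' y| ≤ Mb' := fun y hy' => isMaxOn_iff.mp hxBge y hy'
  have hMb'nn : 0 ≤ Mb' := abs_nonneg _
  have hMbpos : 0 < Mb := lt_of_lt_of_le hmpos (hMble xm hxm)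
  set C1 := (2 * Mb' ^ 2 * L ^ 2 + 2 * Mb ^ 2) / m ^ 2 with hC1def
  set C2 := 2 + 2 * (Mb' * L / m) ^ 2 with hC2def
  have hC1nn : 0 ≤ C1 := by positivity
  have hC2nn : 0 ≤ C2 := by positivity
  set C := max (Real.sqrt C1) (Real.sqrt C2) + 1 with hCdef
  have hCpos : 0 < C := by positivity
  have hsC1 : Real.sqrt C1 ≤ C := by
    rw [hCdef]; have := le_max_left (Real.sqrt C1) (Real.sqrt C2); linarith
  have hsC2 : Real.sqrt C2 ≤ C := by
    rw [hCdef]; have := le_max_right (Real.sqrt C1) (Real.sqrt C2); linarith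
  refine ⟨C, hCpos, ?_⟩
  intro α hα H1 H2 H2' h1c h2c h2'c hd hdiv h20 h21
  have II : ∀ u : ℝ → ℝ, ContinuousOn u (Set.Icc y1 y2) →
      IntervalIntegrable u volume y1 y2 := fun u hu => (huIcc ▸ hu).intervalIntegrable
  have hαC : ((α:ℝ):ℂ) ≠ 0 := Complex.ofReal_ne_zero.mpr hα
  have hαpos : 0 < |α| := abs_pos.mpr hα
  have hα2 : (0:ℝ) < α ^ 2 := by positivity
  have hbne : ∀ y ∈ Set.Icc y1 y2, ((b y:ℝ):ℂ) ≠ 0 :=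
    fun y hy' => Complex.ofReal_ne_zero.mpr (hbpos y hy').ne'
  set G := fun y => H1 y - Complex.I / ((α : ℂ) * (b y : ℂ)) * (b' y : ℂ) * H2 y with hG
  have hIGdef : (∫ y in y1..y2,
      ‖H1 y - Complex.I / ((α : ℂ) * (b y : ℂ)) * (b' y : ℂ) * H2 y‖ ^ 2)
      = ∫ y in y1..y2, ‖G y‖ ^ 2 := by simp only [hG]
  rw [hIGdef]
  have hH2' : ∀ y ∈ Set.Icc y1 y2, H2' y = -(Complex.I * α * H1 y) :=
    fun y hy' => by linear_combination hdiv y hy'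
  have hnormH2' : ∀ y ∈ Set.Icc y1 y2, ‖H2' y‖ = |α| * ‖H1 y‖ := by
    intro y hy'
    rw [hH2' y hy']
    simp [norm_mul]
  -- continuity
  have hbcC : ContinuousOn (fun y => ((b y:ℝ):ℂ)) (Set.Icc y1 y2) :=
    Complex.continuous_ofReal.comp_continuousOn hbc
  have hb'cC : ContinuousOn (fun y => ((b' y:ℝ):ℂ)) (Set.Icc y1 y2) :=
    Complex.continuous_ofReal.comp_continuousOn hb'c
  have hGc : ContinuousOn G (Set.Icc y1 y2) := by
    rw [hG]
    exact h1c.continuousOn.sub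
      (((continuousOn_const.div (continuousOn_const.mul hbcC)
        (fun y hy' => mul_ne_zero hαC (hbne y hy'))).mul hb'cC).mul h2c.continuousOn)
  -- F = H2 / b
  set F := fun y => H2 y / ((b y:ℝ):ℂ) with hF
  set F' := fun y => (H2' y * ((b y:ℝ):ℂ) - H2 y * ((b' y:ℝ):ℂ)) / ((b y:ℝ):ℂ) ^ 2 with hF'
  have hFd : ∀ y ∈ Set.Icc y1 y2, HasDerivAt F (F' y) y :=
    fun y hy' => (hd y hy').div ((hb y hy').ofReal_comp) (hbne y hy')
  have hFc : ContinuousOn F (Set.Icc y1 y2) :=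
    h2c.continuousOn.div hbcC (fun y hy' => hbne y hy')
  have hF'c : ContinuousOn F' (Set.Icc y1 y2) :=
    ((h2'c.continuousOn.mul hbcC).sub (h2c.continuousOn.mul hb'cC)).div
      (hbcC.pow 2) (fun y hy' => pow_ne_zero 2 (hbne y hy'))
  have hF0 : F y1 = 0 := by simp [hF, h20]
  -- integral comparison helpers
  have mono2 : ∀ (u v w : ℝ → ℂ) (a c : ℝ), ContinuousOn u (Set.Icc y1 y2) →
      ContinuousOn v (Set.Icc y1 y2) → ContinuousOn w (Set.Icc y1 y2) →
      (∀ y ∈ Set.Icc y1 y2, ‖u y‖ ^ 2 ≤ a * ‖v y‖ ^ 2 + c * ‖w y‖ ^ 2) →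
      (∫ y in y1..y2, ‖u y‖ ^ 2) ≤ a * (∫ y in y1..y2, ‖v y‖ ^ 2)
        + c * ∫ y in y1..y2, ‖w y‖ ^ 2 := by
    intro u v w a c hu hv hw hpt
    have h := intervalIntegral.integral_mono_on hy.le (II _ (hu.norm.pow 2))
      (((II _ (hv.norm.pow 2)).const_mul a).add ((II _ (hw.norm.pow 2)).const_mul c)) hpt
    rwa [intervalIntegral.integral_add ((II _ (hv.norm.pow 2)).const_mul a)
      ((II _ (hw.norm.pow 2)).const_mul c), intervalIntegral.integral_const_mul,
      intervalIntegral.integral_const_mul] at h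
  have mono1 : ∀ (u v : ℝ → ℂ) (a : ℝ), ContinuousOn u (Set.Icc y1 y2) →
      ContinuousOn v (Set.Icc y1 y2) →
      (∀ y ∈ Set.Icc y1 y2, ‖u y‖ ^ 2 ≤ a * ‖v y‖ ^ 2) →
      (∫ y in y1..y2, ‖u y‖ ^ 2) ≤ a * ∫ y in y1..y2, ‖v y‖ ^ 2 := by
    intro u v a hu hv hpt
    have h := intervalIntegral.integral_mono_on hy.le (II _ (hu.norm.pow 2))
      ((II _ (hv.norm.pow 2)).const_mul a) hpt
    rwa [intervalIntegral.integral_const_mul] at h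
  -- abbreviations
  set IH1 := ∫ y in y1..y2, ‖H1 y‖ ^ 2 with hIH1
  set IG := ∫ y in y1..y2, ‖G y‖ ^ 2 with hIGd
  set IH2 := ∫ y in y1..y2, ‖H2 y‖ ^ 2 with hIH2
  set IH2' := ∫ y in y1..y2, ‖H2' y‖ ^ 2 with hIH2'
  set IF := ∫ y in y1..y2, ‖F y‖ ^ 2 with hIFd
  set IF' := ∫ y in y1..y2, ‖F' y‖ ^ 2 with hIF'd
  have hIH1nn : 0 ≤ IH1 :=
    intervalIntegral.integral_nonneg hy.le (fun u _ => by positivity)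
  have hIGnn : 0 ≤ IG :=
    intervalIntegral.integral_nonneg hy.le (fun u _ => by positivity)
  ---- Step A : IG ≤ C2 * IH1
  set k := Mb' / (|α| * m) with hk
  have hknn : 0 ≤ k := by positivity
  have hptA : ∀ y ∈ Set.Icc y1 y2, ‖G y‖ ^ 2 ≤ 2 * ‖H1 y‖ ^ 2 + 2 * k ^ 2 * ‖H2 y‖ ^ 2 := by
    intro y hy'
    have hb1 : m ≤ b y := hmle y hy'
    have hb2 : |b' y| ≤ Mb' := hMb'le y hy'
    have hbpos' : 0 < b y := hbpos y hy'
    have e : ‖Complex.I / ((α : ℂ) * (b y : ℂ)) * (b' y : ℂ) * H2 y‖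
        = 1 / (|α| * b y) * |b' y| * ‖H2 y‖ := by
      rw [norm_mul, norm_mul, norm_div, norm_mul, Complex.norm_I]
      simp [abs_of_pos hbpos']
    have hcoef : 1 / (|α| * b y) * |b' y| ≤ k := by
      rw [hk]
      have h1 : 1 / (|α| * b y) ≤ 1 / (|α| * m) := by gcongr
      calc 1 / (|α| * b y) * |b' y| ≤ 1 / (|α| * m) * Mb' :=
            mul_le_mul h1 hb2 (abs_nonneg _) (by positivity)
        _ = Mb' / (|α| * m) := by ring
    have hnorm : ‖Complex.I / ((α : ℂ) * (b y : ℂ)) * (b' y : ℂ) * H2 y‖ ≤ k * ‖H2 y‖ := by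
      rw [e]
      exact mul_le_mul_of_nonneg_right hcoef (norm_nonneg _)
    have htri : ‖G y‖ ≤ ‖H1 y‖ + k * ‖H2 y‖ := by
      calc ‖G y‖ ≤ ‖H1 y‖ + ‖Complex.I / ((α : ℂ) * (b y : ℂ)) * (b' y : ℂ) * H2 y‖ := by
            rw [hG]; exact norm_sub_le _ _
        _ ≤ ‖H1 y‖ + k * ‖H2 y‖ := by linarith
    have hsq : ‖G y‖ ^ 2 ≤ (‖H1 y‖ + k * ‖H2 y‖) ^ 2 :=
      pow_le_pow_left₀ (norm_nonneg _) htri 2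
    have h6 : (‖H1 y‖ + k * ‖H2 y‖) ^ 2 ≤ 2 * ‖H1 y‖ ^ 2 + 2 * (k * ‖H2 y‖) ^ 2 :=
      add_sq_le_two _ _
    have h7 : 2 * (k * ‖H2 y‖) ^ 2 = 2 * k ^ 2 * ‖H2 y‖ ^ 2 := by ring
    linarith
  have hIA : IG ≤ 2 * IH1 + 2 * k ^ 2 * IH2 :=
    mono2 G H1 H2 2 (2 * k ^ 2) hGc h1c.continuousOn h2c.continuousOn hptA
  have hPH2 : IH2 ≤ L ^ 2 * IH2' :=
    aux_poincare y1 y2 hy H2 H2' hd h2'c.continuousOn h20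
  have hIH2'eq : IH2' = α ^ 2 * IH1 := by
    rw [hIH2', hIH1, ← intervalIntegral.integral_const_mul]
    apply intervalIntegral.integral_congr
    intro y hy'
    show ‖H2' y‖ ^ 2 = α ^ 2 * ‖H1 y‖ ^ 2
    rw [hnormH2' y (huIcc ▸ hy'), mul_pow, sq_abs]
  have hk2 : k ^ 2 * α ^ 2 = Mb' ^ 2 / m ^ 2 := by
    rw [hk, div_pow, mul_pow, sq_abs, sq_abs]
    field_simp
  have key2 : IG ≤ C2 * IH1 := by
    have h1 : IH2 ≤ L ^ 2 * (α ^ 2 * IH1) := by rw [← hIH2'eq]; exact hPH2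
    have h2 : 2 * k ^ 2 * IH2 ≤ 2 * k ^ 2 * (L ^ 2 * (α ^ 2 * IH1)) := by
      apply mul_le_mul_of_nonneg_left h1 (by positivity)
    have h3 : 2 * IH1 + 2 * k ^ 2 * (L ^ 2 * (α ^ 2 * IH1)) = C2 * IH1 := by
      rw [hC2def]
      linear_combination (2 * L ^ 2 * IH1) * hk2
    linarith
  ---- Step B : IH1 ≤ C1 * IG
  have hPF : IF ≤ L ^ 2 * IF' := aux_poincare y1 y2 hy F F' hFd hF'c hF0
  have hptB1 : ∀ y ∈ Set.Icc y1 y2, ‖F' y‖ ^ 2 ≤ α ^ 2 / m ^ 2 * ‖G y‖ ^ 2 := by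
    intro y hy'
    have hbpos' : 0 < b y := hbpos y hy'
    have hb1 : m ≤ b y := hmle y hy'
    have hid : F' y = -(Complex.I * (α:ℂ)) / ((b y:ℝ):ℂ) * G y := by
      have hbneq := hbne y hy'
      simp only [hF', hG]
      rw [hH2' y hy']
      field_simp
      linear_combination (-(H2 y * ((b' y:ℝ):ℂ))) * Complex.I_sq
    have hn : ‖F' y‖ = |α| / b y * ‖G y‖ := by
      rw [hid, norm_mul, norm_div, norm_neg, norm_mul, Complex.norm_I]
      simp [abs_of_pos hbpos']
    rw [hn]
    have h1 : |α| / b y ≤ |α| / m := by gcongr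
    have h2 : (|α| / b y) ^ 2 ≤ (|α| / m) ^ 2 := by
      apply pow_le_pow_left₀ (by positivity) h1
    have h3 : (|α| / m) ^ 2 = α ^ 2 / m ^ 2 := by rw [div_pow, sq_abs]
    have h4 := mul_le_mul_of_nonneg_right h2 (sq_nonneg ‖G y‖)
    rw [mul_pow, ← h3]
    exact h4
  have hIF'le : IF' ≤ α ^ 2 / m ^ 2 * IG := mono1 F' G _ hF'c hGc hptB1
  have hptB2 : ∀ y ∈ Set.Icc y1 y2,
      ‖H1 y‖ ^ 2 ≤ 2 * Mb' ^ 2 / α ^ 2 * ‖F y‖ ^ 2 + 2 * Mb ^ 2 / α ^ 2 * ‖F' y‖ ^ 2 := by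
    intro y hy'
    have hbpos' : 0 < b y := hbpos y hy'
    have hb2 : |b' y| ≤ Mb' := hMb'le y hy'
    have hb3 : b y ≤ Mb := hMble y hy'
    have hid : H2' y = ((b' y:ℝ):ℂ) * F y + ((b y:ℝ):ℂ) * F' y := by
      have hbneq := hbne y hy'
      simp only [hF, hF']
      field_simp
      ring
    have hn1 : ‖H2' y‖ ≤ Mb' * ‖F y‖ + Mb * ‖F' y‖ := by
      calc ‖H2' y‖ ≤ ‖((b' y:ℝ):ℂ) * F y‖ + ‖((b y:ℝ):ℂ) * F' y‖ := by
            rw [hid]; exact norm_add_le _ _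
        _ ≤ Mb' * ‖F y‖ + Mb * ‖F' y‖ := by
            rw [norm_mul, norm_mul]
            simp only [Complex.norm_real, Real.norm_eq_abs]
            exact add_le_add (mul_le_mul_of_nonneg_right hb2 (norm_nonneg _))
              (mul_le_mul_of_nonneg_right (by rw [abs_of_pos hbpos']; exact hb3)
                (norm_nonneg _))
    have hn2 : |α| * ‖H1 y‖ ≤ Mb' * ‖F y‖ + Mb * ‖F' y‖ := by
      rw [← hnormH2' y hy']; exact hn1
    have h4 : (|α| * ‖H1 y‖) ^ 2 ≤ (Mb' * ‖F y‖ + Mb * ‖F' y‖) ^ 2 := by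
      apply pow_le_pow_left₀ (by positivity) hn2
    rw [mul_pow, sq_abs] at h4
    have h5 : (Mb' * ‖F y‖ + Mb * ‖F' y‖) ^ 2
        ≤ 2 * Mb' ^ 2 * ‖F y‖ ^ 2 + 2 * Mb ^ 2 * ‖F' y‖ ^ 2 := by
      have h6 := add_sq_le_two (Mb' * ‖F y‖) (Mb * ‖F' y‖)
      have h7 : 2 * (Mb' * ‖F y‖) ^ 2 + 2 * (Mb * ‖F' y‖) ^ 2
          = 2 * Mb' ^ 2 * ‖F y‖ ^ 2 + 2 * Mb ^ 2 * ‖F' y‖ ^ 2 := by ring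
      linarith
    rw [div_mul_eq_mul_div, div_mul_eq_mul_div, ← add_div, le_div_iff₀ hα2]
    have h8 : ‖H1 y‖ ^ 2 * α ^ 2 = α ^ 2 * ‖H1 y‖ ^ 2 := by ring
    linarith
  have hIB : IH1 ≤ 2 * Mb' ^ 2 / α ^ 2 * IF + 2 * Mb ^ 2 / α ^ 2 * IF' :=
    mono2 H1 F F' _ _ h1c.continuousOn hFc hF'c hptB2
  have key1 : IH1 ≤ C1 * IG := by
    have h1 : IF ≤ L ^ 2 * (α ^ 2 / m ^ 2 * IG) := by
      calc IF ≤ L ^ 2 * IF' := hPF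
        _ ≤ L ^ 2 * (α ^ 2 / m ^ 2 * IG) := by
            apply mul_le_mul_of_nonneg_left hIF'le (by positivity)
    have h2 : 2 * Mb' ^ 2 / α ^ 2 * IF ≤ 2 * Mb' ^ 2 / α ^ 2 * (L ^ 2 * (α ^ 2 / m ^ 2 * IG)) :=
      mul_le_mul_of_nonneg_left h1 (by positivity)
    have h3 : 2 * Mb ^ 2 / α ^ 2 * IF' ≤ 2 * Mb ^ 2 / α ^ 2 * (α ^ 2 / m ^ 2 * IG) :=
      mul_le_mul_of_nonneg_left hIF'le (by positivity)
    have h4 : 2 * Mb' ^ 2 / α ^ 2 * (L ^ 2 * (α ^ 2 / m ^ 2 * IG))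
        + 2 * Mb ^ 2 / α ^ 2 * (α ^ 2 / m ^ 2 * IG) = C1 * IG := by
      rw [hC1def]
      field_simp
    linarith
  ---- conclude
  constructor
  · have h1 : Real.sqrt IH1 ≤ Real.sqrt C1 * Real.sqrt IG := by
      rw [← Real.sqrt_mul hC1nn]
      exact Real.sqrt_le_sqrt key1
    have h2 : Real.sqrt IH1 ≤ C * Real.sqrt IG :=
      h1.trans (mul_le_mul_of_nonneg_right hsC1 (Real.sqrt_nonneg _))
    rw [inv_mul_le_iff₀ hCpos]
    exact h2
  · have h1 : Real.sqrt IG ≤ Real.sqrt C2 * Real.sqrt IH1 := by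
      rw [← Real.sqrt_mul hC2nn]
      exact Real.sqrt_le_sqrt key2
    exact h1.trans (mul_le_mul_of_nonneg_right hsC2 (Real.sqrt_nonneg _))
end
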